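/- arXiv:2110.13302 — 2 statements merged into one kernel-verified Lean document; each statement's English description precedes it below -/
import Mathlib

section
/- Let r = (R_j)_{j≥1} be a generic sequence of radii, c ∈ C(r), j ≥ 1, and N ≥ 1. Let z ∈ ℂ_p with |z| > ϱ, and assume that f_c^{∘n}(z) ∈ {w ∈ ℂ_p : |w| < R_j} \ (B_1 ∪ ⋯ ∪ B_{j−1}) for all 0 ≤ n < N. Then |∂_j f_c^{∘N}(z)| = φ^{∘N}(|z|)·φ^{∘(N−1)}(|z|)/R_j². -/
noncomputable section

/-- `K` is a model of `ℂ_p`, the completion of an algebraic closure of `ℚ_p`: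
it is a complete, algebraically closed, nonarchimedean normed field whose norm
extends the `p`-adic absolute value and in which the algebraic elements over
`ℚ_p` are dense. -/
structure IsCp (p : ℕ) [Fact p.Prime] (K : Type*) [NormedField K] [Algebra ℚ_[p] K] : Prop where
  complete : CompleteSpace K
  norm_extends : ∀ x : ℚ_[p], ‖algebraMap ℚ_[p] K x‖ = ‖x‖
  isAlgClosed : IsAlgClosed K
  dense_algebraic : Dense {x : K | IsAlgebraic ℚ_[p] x}
  isNonarch : ∀ x y : K, ‖x + y‖ ≤ max ‖x‖ ‖y‖

/-- `ϱ = p^{-1/(p-1)}`. -/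
def rho (p : ℕ) : ℝ := (p : ℝ) ^ (-1 / ((p : ℝ) - 1))

/-- `R` is a sequence of radii: strictly increasing (for indices `≥ 1`),
with `R 1 > p`, tending to infinity. -/
def IsRadii (p : ℕ) (R : ℕ → ℝ) : Prop :=
  (∀ j, 1 ≤ j → R j < R (j + 1)) ∧ (p : ℝ) < R 1 ∧
    Filter.Tendsto R Filter.atTop Filter.atTop

/-- The piecewise-monomial map `φ`: for `R_{j-1} < t ≤ R_j` (with `R_0 := 0`),
`φ(t) = p (R_1 ⋯ R_{j-1})⁻¹ t^{p+j-1}`. -/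
def phi (p : ℕ) (R : ℕ → ℝ) (t : ℝ) : ℝ :=
  let j := sInf {j : ℕ | 1 ≤ j ∧ t ≤ R j}
  (p : ℝ) * (∏ i ∈ Finset.Icc 1 (j - 1), R i)⁻¹ * t ^ (p + j - 1)

/-- A generic sequence of radii. -/
def IsGenericRadii (p : ℕ) (R : ℕ → ℝ) : Prop :=
  IsRadii p R ∧ ∀ i j n : ℕ, 1 ≤ i → i < j → 1 ≤ n → (phi p R)^[n] (R i) ≠ R j

/-- Membership in the parameter space `C(r)`: `|c_j| = R_j` for all `j ≥ 1`. -/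
def InC (p : ℕ) [Fact p.Prime] {K : Type*} [NormedField K] (R : ℕ → ℝ) (c : ℕ → K) : Prop :=
  ∀ j, 1 ≤ j → ‖c j‖ = R j

/-- The transcendental entire map `f_c(z) = (z^p/p) ∏_{j ≥ 1} (1 - z/c_j)`. -/
def fc (p : ℕ) {K : Type*} [NormedField K] (c : ℕ → K) (z : K) : K :=
  z ^ p / (p : K) * ∏' j : ℕ, (1 - z / c (j + 1))

/-- The disk `B_0 = {|z| < 1}` for `j = 0`, and `B_j = {|z - c_j| < R_j}` for `j ≥ 1`. -/
def Bset {K : Type*} [NormedField K] (R : ℕ → ℝ) (c : ℕ → K) (j : ℕ) : Set K :=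
  if j = 0 then {z : K | ‖z‖ < 1} else {z : K | ‖z - c j‖ < R j}

/-- The set `A`, complement of all the disks `B_j`, `j ≥ 0`. -/
def Aset {K : Type*} [NormedField K] (R : ℕ → ℝ) (c : ℕ → K) : Set K :=
  (⋃ j, Bset R c j)ᶜ

/-- `n_j`, the minimal `n ≥ 1` with `R_j < φ^{∘(n+1)}(1)`. -/
def nseq (p : ℕ) (R : ℕ → ℝ) (j : ℕ) : ℕ :=
  sInf {n : ℕ | 1 ≤ n ∧ R j < (phi p R)^[n + 1] 1}

/-- `S_j = φ⁻¹(R_j)`. -/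
def Sse (p : ℕ) (R : ℕ → ℝ) (j : ℕ) : ℝ := Function.invFun (phi p R) (R j)

/-- `λ_j = φ(R_j)/R_j`. -/
def lam (p : ℕ) (R : ℕ → ℝ) (j : ℕ) : ℝ := phi p R (R j) / R j

/-- `L_k`: index of the first symbol of the `k`-th block `B_0^{m_k} A^{n_k} B_k^{…}`
of the itinerary `α(m, ℓ)`; `L_1 = 0` and `L_{k+1} = L_k + m_k + n_k + ℓ_{k+1}`. -/
def Lseq (m n l : ℕ → ℕ) : ℕ → ℕ
  | 0 => 0
  | 1 => 0
  | k + 2 => Lseq m n l (k + 1) + m (k + 1) + n (k + 1) + l (k + 2)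

/-- `N_k = L_k + m_k + n_k`, the index of the final symbol `B_k` of the truncated
itinerary `α^{(k)}` (so `α^{(k)}` has length `N_k + 1`). -/
def Nseq (m n l : ℕ → ℕ) (k : ℕ) : ℕ := Lseq m n l k + m k + n k

/-- The symbol (`some 0 = B_0`, `none = A`, `some k = B_k`) at position `i` of the
itinerary `α(m,ℓ) = B_0^{m_1} A^{n_1} B_1^{ℓ_2} B_0^{m_2} A^{n_2} B_2^{ℓ_3} ⋯`. -/
def itin (m n l : ℕ → ℕ) (i : ℕ) : Option ℕ :=
  let k := sSup {k : ℕ | 1 ≤ k ∧ Lseq m n l k ≤ i}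
  if i < Lseq m n l k + m k then some 0
  else if i < Lseq m n l k + m k + n k then none
  else some k

/-- The subset of `ℂ_p` corresponding to a symbol of the alphabet `{A, B_0, B_1, …}`. -/
def symbSet {K : Type*} [NormedField K] (R : ℕ → ℝ) (c : ℕ → K) : Option ℕ → Set K
  | none => Aset R c
  | some j => Bset R c j

/-- Condition (3.2) at `k`: `ϱ⁻¹ R_k p^{-m_k} λ_k^{ℓ_{k+1}} < 1`. -/
def Cond32 (p : ℕ) (R : ℕ → ℝ) (m l : ℕ → ℕ) (k : ℕ) : Prop :=
  (rho p)⁻¹ * R k * ((p : ℝ) ^ m k)⁻¹ * lam p R k ^ l (k + 1) < 1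

/-- Condition (3.3) for `k`: for all `2 ≤ j < k`,
`ε_k < ϱ^{k-j} R_k² (R_{j-1} S_{j-1})⁻¹ λ_{j-1}^{-ℓ_j}`. -/
def Cond33 (p : ℕ) (R : ℕ → ℝ) (ε : ℕ → ℝ) (l : ℕ → ℕ) (k : ℕ) : Prop :=
  ∀ j, 2 ≤ j → j < k →
    ε k < rho p ^ (k - j) * R k ^ 2 * (R (j - 1) * Sse p R (j - 1))⁻¹ *
      (lam p R (j - 1) ^ l j)⁻¹

/-- Condition (3.4) for `k`: for all `2 ≤ j ≤ k`,
`ϱ^{-2} R_{j-1} S_{j-1} λ_{j-1}^{ℓ_j} p^{-m_j} < 1`. -/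
def Cond34 (p : ℕ) (R : ℕ → ℝ) (m l : ℕ → ℕ) (k : ℕ) : Prop :=
  ∀ j, 2 ≤ j → j ≤ k →
    ((rho p) ^ 2)⁻¹ * (R (j - 1) * Sse p R (j - 1)) * lam p R (j - 1) ^ l j *
      ((p : ℝ) ^ m j)⁻¹ < 1

/-- Condition (3.5) at `k`: `p ϱ⁻¹ R_{k+1}² S_k⁻¹ λ_k^{-ℓ_{k+1}} < ε_{k+1}`. -/
def Cond35 (p : ℕ) (R : ℕ → ℝ) (ε : ℕ → ℝ) (l : ℕ → ℕ) (k : ℕ) : Prop :=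
  (p : ℝ) * (rho p)⁻¹ * R (k + 1) ^ 2 * (Sse p R k)⁻¹ * (lam p R k ^ l (k + 1))⁻¹ < ε (k + 1)

/-- `c' ∈ Δ_k(c, ε)`. -/
def InDelta (p : ℕ) [Fact p.Prime] {K : Type*} [NormedField K] (R : ℕ → ℝ) (c : ℕ → K)
    (ε : ℕ → ℝ) (k : ℕ) (c' : ℕ → K) : Prop :=
  InC p R c' ∧ (∀ j, 1 ≤ j → j < k → c' j = c j) ∧ ∀ j, k ≤ j → ‖c' j - c j‖ < ε j

/-- `c' ∈ U_k(c, ε)`. -/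
def InU (p : ℕ) [Fact p.Prime] {K : Type*} [NormedField K] (R : ℕ → ℝ) (c : ℕ → K)
    (k : ℕ) (ε : ℝ) (c' : ℕ → K) : Prop :=
  InC p R c' ∧ ‖c' k - c k‖ < ε ∧ ∀ j, 1 ≤ j → j ≠ k → c' j = c j


section NAHelpers
open Filter
variable {K : Type*} [NormedField K]

lemma na_sum (hna : ∀ x y : K, ‖x + y‖ ≤ max ‖x‖ ‖y‖) {ι : Type*} (s : Finset ι) (f : ι → K)
    {δ : ℝ} (hδ : 0 ≤ δ) (h : ∀ i ∈ s, ‖f i‖ ≤ δ) : ‖∑ i ∈ s, f i‖ ≤ δ := by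
  classical
  induction s using Finset.induction_on with
  | empty => simpa
  | @insert b s' hi ih =>
    rw [Finset.sum_insert hi]
    refine le_trans (hna _ _) (max_le (h _ (Finset.mem_insert_self _ _)) ?_)
    exact ih fun i hi' => h i (Finset.mem_insert_of_mem hi')

lemma na_add_eq (hna : ∀ x y : K, ‖x + y‖ ≤ max ‖x‖ ‖y‖) {x y : K} (h : ‖x‖ < ‖y‖) :
    ‖x + y‖ = ‖y‖ := by
  refine le_antisymm (le_trans (hna _ _) (max_le h.le le_rfl)) ?_
  by_contra hlt
  push_neg at hlt
  have : ‖y‖ ≤ max ‖x + y‖ ‖x‖ := by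
    calc ‖y‖ = ‖x + y + -x‖ := by ring_nf
    _ ≤ max ‖x + y‖ ‖-x‖ := hna _ _
    _ = max ‖x + y‖ ‖x‖ := by rw [norm_neg]
  rcases max_cases ‖x + y‖ ‖x‖ with ⟨he, _⟩ | ⟨he, _⟩ <;> rw [he] at this <;> linarith

lemma na_one_sub (hna : ∀ x y : K, ‖x + y‖ ≤ max ‖x‖ ‖y‖) {x : K} (h : ‖x‖ < 1) :
    ‖1 - x‖ = 1 := by
  have := na_add_eq hna (x := -x) (y := 1) (by simpa using h)
  simpa [sub_eq_add_neg, add_comm] using this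

lemma na_sub_eq_left (hna : ∀ x y : K, ‖x + y‖ ≤ max ‖x‖ ‖y‖) {x y : K} (h : ‖y‖ < ‖x‖) :
    ‖x - y‖ = ‖x‖ := by
  have := na_add_eq hna (x := -y) (y := x) (by simpa using h)
  simpa [sub_eq_add_neg, add_comm] using this

lemma na_prod_sub_one (hna : ∀ x y : K, ‖x + y‖ ≤ max ‖x‖ ‖y‖) {ι : Type*} (s : Finset ι)
    (a : ι → K) {δ : ℝ} (hδ : 0 ≤ δ) (hδ1 : δ ≤ 1) (h : ∀ i ∈ s, ‖a i‖ ≤ δ) :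
    ‖(∏ i ∈ s, (1 + a i)) - 1‖ ≤ δ := by
  classical
  induction s using Finset.induction_on with
  | empty => simpa
  | @insert b s' hi ih =>
    have hs' : ‖(∏ i ∈ s', (1 + a i)) - 1‖ ≤ δ := ih fun i hi' => h i (Finset.mem_insert_of_mem hi')
    have hprod : ‖∏ i ∈ s', (1 + a i)‖ ≤ 1 := by
      have : ‖(∏ i ∈ s', (1 + a i)) - 1 + 1‖ ≤ max ‖(∏ i ∈ s', (1 + a i)) - 1‖ ‖(1:K)‖ := hna _ _
      simpa using this.trans (max_le (hs'.trans hδ1) (by simp))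
    rw [Finset.prod_insert hi]
    have key : (1 + a b) * ∏ i ∈ s', (1 + a i) - 1
        = ((∏ i ∈ s', (1 + a i)) - 1) + a b * ∏ i ∈ s', (1 + a i) := by ring
    rw [key]
    refine le_trans (hna _ _) (max_le hs' ?_)
    rw [norm_mul]
    calc ‖a b‖ * ‖∏ i ∈ s', (1 + a i)‖ ≤ δ * 1 :=
      mul_le_mul (h b (Finset.mem_insert_self _ _)) hprod (norm_nonneg _) hδ
    _ = δ := mul_one δ

lemma na_prod_le_one (hna : ∀ x y : K, ‖x + y‖ ≤ max ‖x‖ ‖y‖) {ι : Type*} (s : Finset ι)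
    (a : ι → K) (h : ∀ i ∈ s, ‖a i‖ ≤ 1) : ‖∏ i ∈ s, (1 + a i)‖ ≤ 1 := by
  have h1 := na_prod_sub_one hna s a zero_le_one le_rfl h
  have : ‖(∏ i ∈ s, (1 + a i)) - 1 + 1‖ ≤ max ‖(∏ i ∈ s, (1 + a i)) - 1‖ ‖(1:K)‖ := hna _ _
  simpa using this.trans (max_le h1 (by simp))

lemma na_prod_taylor (hna : ∀ x y : K, ‖x + y‖ ≤ max ‖x‖ ‖y‖) {ι : Type*} (s : Finset ι)
    (b : ι → K) (x : K) {β : ℝ} (hβ0 : 0 ≤ β) (hβ : ∀ i ∈ s, ‖b i‖ ≤ β) (hx : ‖x‖ * β ≤ 1) :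
    ‖(∏ i ∈ s, (1 + x * b i)) - 1 - x * ∑ i ∈ s, b i‖ ≤ ‖x‖ ^ 2 * β ^ 2 := by
  classical
  induction s using Finset.induction_on with
  | empty => simpa using mul_nonneg (by positivity) (by positivity)
  | @insert c s' hi ih =>
    have ihs := ih fun i hi' => hβ i (Finset.mem_insert_of_mem hi')
    have hxb : ∀ i ∈ s', ‖x * b i‖ ≤ ‖x‖ * β := fun i hi' => by
      rw [norm_mul]
      exact mul_le_mul_of_nonneg_left (hβ i (Finset.mem_insert_of_mem hi')) (norm_nonneg _)
    have hps := na_prod_sub_one hna s' (fun i => x * b i) (by positivity) hx hxb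
    rw [Finset.prod_insert hi, Finset.sum_insert hi]
    have key : (1 + x * b c) * ∏ i ∈ s', (1 + x * b i) - 1 - x * (b c + ∑ i ∈ s', b i)
        = ((∏ i ∈ s', (1 + x * b i)) - 1 - x * ∑ i ∈ s', b i)
          + (x * b c) * ((∏ i ∈ s', (1 + x * b i)) - 1) := by ring
    rw [key]
    refine le_trans (hna _ _) (max_le ihs ?_)
    rw [norm_mul, norm_mul]
    calc ‖x‖ * ‖b c‖ * ‖(∏ i ∈ s', (1 + x * b i)) - 1‖ ≤ (‖x‖ * β) * (‖x‖ * β) := by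
          refine mul_le_mul ?_ hps (norm_nonneg _) (by positivity)
          exact mul_le_mul_of_nonneg_left (hβ c (Finset.mem_insert_self _ _)) (norm_nonneg _)
    _ = ‖x‖ ^ 2 * β ^ 2 := by ring

lemma na_summable (hna : ∀ x y : K, ‖x + y‖ ≤ max ‖x‖ ‖y‖) [CompleteSpace K] {b : ℕ → K}
    (hb : Tendsto (fun i => ‖b i‖) atTop (nhds 0)) : Summable b := by
  rw [summable_iff_vanishing]
  intro e he
  rcases Metric.mem_nhds_iff.1 he with ⟨ε, hε, hsub⟩
  have : ∀ᶠ i in atTop, ‖b i‖ < ε / 2 := hb.eventually (eventually_lt_nhds (by linarith))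
  rcases eventually_atTop.1 this with ⟨M, hM⟩
  refine ⟨Finset.range M, fun t ht => ?_⟩
  apply hsub
  have : ‖∑ i ∈ t, b i‖ ≤ ε / 2 := by
    refine na_sum hna t b (by linarith) fun i hi => ?_
    refine (hM i ?_).le
    by_contra hlt
    push_neg at hlt
    exact (Finset.disjoint_left.1 ht hi) (Finset.mem_range.2 hlt)
  simpa [Metric.mem_ball] using this.trans_lt (by linarith)

lemma na_multipliable (hna : ∀ x y : K, ‖x + y‖ ≤ max ‖x‖ ‖y‖) [CompleteSpace K] {a : ℕ → K}
    (ha : Tendsto (fun i => ‖a i‖) atTop (nhds 0)) : Multipliable fun i => 1 + a i := by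
  classical
  have h1 : ∀ᶠ i in atTop, ‖a i‖ ≤ 1 := ha.eventually (eventually_le_nhds one_pos)
  rcases eventually_atTop.1 h1 with ⟨M₀, hM₀⟩
  set C : ℝ := ‖∏ i ∈ Finset.range M₀, (1 + a i)‖ with hC
  have hCnn : 0 ≤ C := norm_nonneg _
  have hbig : ∀ s : Finset ℕ, Finset.range M₀ ⊆ s → ‖∏ i ∈ s, (1 + a i)‖ ≤ C := by
    intro s hs
    rw [← Finset.prod_sdiff hs, norm_mul, hC]
    have h2 : ‖∏ i ∈ s \ Finset.range M₀, (1 + a i)‖ ≤ 1 := by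
      refine na_prod_le_one hna _ _ fun i hi => ?_
      rcases Finset.mem_sdiff.1 hi with ⟨_, hnot⟩
      simp only [Finset.mem_range] at hnot
      exact hM₀ i (by omega)
    calc ‖∏ i ∈ s \ Finset.range M₀, (1 + a i)‖ * ‖∏ i ∈ Finset.range M₀, (1 + a i)‖
        ≤ 1 * ‖∏ i ∈ Finset.range M₀, (1 + a i)‖ :=
          mul_le_mul_of_nonneg_right h2 (norm_nonneg _)
    _ = ‖∏ i ∈ Finset.range M₀, (1 + a i)‖ := one_mul _
  have hcs : CauchySeq fun s : Finset ℕ => ∏ i ∈ s, (1 + a i) := by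
    rw [Metric.cauchySeq_iff]
    intro ε hε
    have hδpos : 0 < min 1 (ε / (2 * (C + 1))) := lt_min one_pos (by positivity)
    have h2 : ∀ᶠ i in atTop, ‖a i‖ ≤ min 1 (ε / (2 * (C + 1))) :=
      ha.eventually (eventually_le_nhds hδpos)
    rcases eventually_atTop.1 h2 with ⟨M₁, hM₁⟩
    refine ⟨Finset.range (max M₀ M₁), fun s hs t ht => ?_⟩
    have hsub : ∀ u : Finset ℕ, Finset.range (max M₀ M₁) ⊆ u →
        dist (∏ i ∈ u ∪ (s ∪ t), (1 + a i)) (∏ i ∈ u, (1 + a i))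
          ≤ C * min 1 (ε / (2 * (C + 1))) := by
      intro u hu
      have husub : u ⊆ u ∪ (s ∪ t) := Finset.subset_union_left
      rw [dist_eq_norm, ← Finset.prod_sdiff husub]
      have hre : (∏ i ∈ (u ∪ (s ∪ t)) \ u, (1 + a i)) * (∏ i ∈ u, (1 + a i))
          - (∏ i ∈ u, (1 + a i))
          = ((∏ i ∈ (u ∪ (s ∪ t)) \ u, (1 + a i)) - 1) * (∏ i ∈ u, (1 + a i)) := by ring
      rw [hre, norm_mul]
      have hu0 : Finset.range M₀ ⊆ u := by
        refine le_trans ?_ hu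
        intro i hi
        exact Finset.mem_range.2 (lt_of_lt_of_le (Finset.mem_range.1 hi) (le_max_left _ _))
      have hC' := hbig u hu0
      have htail : ‖(∏ i ∈ (u ∪ (s ∪ t)) \ u, (1 + a i)) - 1‖ ≤ min 1 (ε / (2 * (C + 1))) := by
        refine na_prod_sub_one hna _ _ hδpos.le (min_le_left _ _) fun i hi => ?_
        rcases Finset.mem_sdiff.1 hi with ⟨_, hnot⟩
        have h3 : ¬ i < max M₀ M₁ := fun hlt => hnot (hu (Finset.mem_range.2 hlt))
        exact hM₁ i (by omega)
      calc ‖(∏ i ∈ (u ∪ (s ∪ t)) \ u, (1 + a i)) - 1‖ * ‖∏ i ∈ u, (1 + a i)‖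
          ≤ min 1 (ε / (2 * (C + 1))) * C :=
            mul_le_mul htail hC' (norm_nonneg _) hδpos.le
      _ = C * min 1 (ε / (2 * (C + 1))) := mul_comm _ _
    have hCδ : C * min 1 (ε / (2 * (C + 1))) < ε / 2 := by
      have hle : min 1 (ε / (2 * (C + 1))) ≤ ε / (2 * (C + 1)) := min_le_right _ _
      have : C * min 1 (ε / (2 * (C + 1))) ≤ C * (ε / (2 * (C + 1))) :=
        mul_le_mul_of_nonneg_left hle hCnn
      refine this.trans_lt ?_
      rw [mul_div_assoc', div_lt_div_iff₀ (by positivity) (by norm_num : (0:ℝ) < 2)]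
      nlinarith
    have hset : s ∪ (s ∪ t) = t ∪ (s ∪ t) := by
      ext i; simp only [Finset.mem_union]; tauto
    have d1 := hsub s hs
    have d2 := hsub t ht
    rw [← hset] at d2
    refine lt_of_le_of_lt
      (dist_triangle (∏ i ∈ s, (1 + a i)) (∏ i ∈ s ∪ (s ∪ t), (1 + a i))
        (∏ i ∈ t, (1 + a i))) ?_
    have e1 : dist (∏ i ∈ s, (1 + a i)) (∏ i ∈ s ∪ (s ∪ t), (1 + a i))
        = dist (∏ i ∈ s ∪ (s ∪ t), (1 + a i)) (∏ i ∈ s, (1 + a i)) := dist_comm _ _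
    have e2 : dist (∏ i ∈ s ∪ (s ∪ t), (1 + a i)) (∏ i ∈ t, (1 + a i))
        = dist (∏ i ∈ s ∪ (s ∪ t), (1 + a i)) (∏ i ∈ t, (1 + a i)) := rfl
    linarith [d1, d2, e1.ge, e1.le]
  rcases cauchySeq_tendsto_of_complete hcs with ⟨x, hx⟩
  exact ⟨x, hx⟩

lemma na_tprod_sub_one (hna : ∀ x y : K, ‖x + y‖ ≤ max ‖x‖ ‖y‖) {a : ℕ → K}
    (hm : Multipliable fun i => 1 + a i) {δ : ℝ} (hδ : 0 ≤ δ) (hδ1 : δ ≤ 1)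
    (h : ∀ i, ‖a i‖ ≤ δ) : ‖(∏' i, (1 + a i)) - 1‖ ≤ δ := by
  have ht : Tendsto (fun s : Finset ℕ => ‖(∏ i ∈ s, (1 + a i)) - 1‖) atTop
      (nhds ‖(∏' i, (1 + a i)) - 1‖) :=
    ((hm.hasProd.sub_const 1).norm : _)
  exact le_of_tendsto ht (Eventually.of_forall fun s =>
    na_prod_sub_one hna s a hδ hδ1 fun i _ => h i)

lemma na_tprod_norm_one (hna : ∀ x y : K, ‖x + y‖ ≤ max ‖x‖ ‖y‖) {a : ℕ → K}
    (hm : Multipliable fun i => 1 + a i) {δ : ℝ} (hδ : 0 ≤ δ) (hδ1 : δ < 1)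
    (h : ∀ i, ‖a i‖ ≤ δ) : ‖∏' i, (1 + a i)‖ = 1 := by
  have h1 := na_tprod_sub_one hna hm hδ hδ1.le h
  have : (∏' i, (1 + a i)) = ((∏' i, (1 + a i)) - 1) + 1 := by ring
  rw [this, na_add_eq hna (by rw [norm_one]; exact h1.trans_lt hδ1)]
  exact norm_one

lemma na_tsum_le (hna : ∀ x y : K, ‖x + y‖ ≤ max ‖x‖ ‖y‖) {b : ℕ → K}
    (hb : Summable b) {δ : ℝ} (hδ : 0 ≤ δ) (h : ∀ i, ‖b i‖ ≤ δ) : ‖∑' i, b i‖ ≤ δ := by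
  have ht : Tendsto (fun s : Finset ℕ => ‖∑ i ∈ s, b i‖) atTop (nhds ‖∑' i, b i‖) :=
    hb.hasSum.norm
  exact le_of_tendsto ht (Eventually.of_forall fun s => na_sum hna s b hδ fun i _ => h i)

lemma na_tprod_taylor (hna : ∀ x y : K, ‖x + y‖ ≤ max ‖x‖ ‖y‖) [CompleteSpace K] {b : ℕ → K}
    {β : ℝ} (hβ0 : 0 ≤ β) (hb : Summable b) (hβ : ∀ i, ‖b i‖ ≤ β) (x : K) (hx : ‖x‖ * β ≤ 1)
    (hm : Multipliable fun i => 1 + x * b i) :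
    ‖(∏' i, (1 + x * b i)) - 1 - x * ∑' i, b i‖ ≤ ‖x‖ ^ 2 * β ^ 2 := by
  have hP := hm.hasProd
  have hS := hb.hasSum
  have ht : Tendsto
      (fun s : Finset ℕ => ‖(∏ i ∈ s, (1 + x * b i)) - 1 - x * ∑ i ∈ s, b i‖) atTop
      (nhds ‖(∏' i, (1 + x * b i)) - 1 - x * ∑' i, b i‖) := by
    have : Tendsto (fun s : Finset ℕ => (∏ i ∈ s, (1 + x * b i)) - 1 - x * ∑ i ∈ s, b i) atTop
        (nhds ((∏' i, (1 + x * b i)) - 1 - x * ∑' i, b i)) :=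
      (hP.sub_const 1).sub (hS.const_mul x)
    exact this.norm
  exact le_of_tendsto ht (Eventually.of_forall fun s =>
    na_prod_taylor hna s b x hβ0 (fun i _ => hβ i) hx)

lemma na_tprod_norm_split (hna : ∀ x y : K, ‖x + y‖ ≤ max ‖x‖ ‖y‖) [CompleteSpace K]
    {a : ℕ → K} (ha : Tendsto (fun i => ‖a i‖) atTop (nhds 0)) (M : ℕ) {δ : ℝ} (hδ : 0 ≤ δ)
    (hδ1 : δ < 1) (h : ∀ i, M ≤ i → ‖a i‖ ≤ δ) :
    ‖∏' i, (1 + a i)‖ = ‖∏ i ∈ Finset.range M, (1 + a i)‖ := by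
  classical
  set a₁ : ℕ → K := fun i => if i < M then a i else 0 with ha₁
  set a₂ : ℕ → K := fun i => if i < M then 0 else a i with ha₂
  have hm₁ : Multipliable fun i => 1 + a₁ i := by
    refine na_multipliable hna ?_
    refine tendsto_nhds_of_eventually_eq ?_
    filter_upwards [eventually_ge_atTop M] with i hi
    simp [ha₁, Nat.not_lt.2 hi]
  have hm₂ : Multipliable fun i => 1 + a₂ i := by
    refine na_multipliable hna ?_
    refine squeeze_zero (fun i => norm_nonneg _) (fun i => ?_) ha
    by_cases hi : i < M <;> simp [ha₂, hi]
  have hle₂ : ∀ i, ‖a₂ i‖ ≤ δ := by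
    intro i
    by_cases hi : i < M
    · simp [ha₂, hi, hδ]
    · simpa [ha₂, hi] using h i (Nat.not_lt.1 hi)
  have hfac : ∀ i, (1 + a i) = (1 + a₁ i) * (1 + a₂ i) := by
    intro i
    by_cases hi : i < M <;> simp [ha₁, ha₂, hi]
  have hsplit : (∏' i, (1 + a i)) = (∏' i, (1 + a₁ i)) * ∏' i, (1 + a₂ i) := by
    rw [← Multipliable.tprod_mul hm₁ hm₂]
    exact tprod_congr hfac
  have hfin : (∏' i, (1 + a₁ i)) = ∏ i ∈ Finset.range M, (1 + a₁ i) := by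
    refine tprod_eq_prod fun i hi => ?_
    simp only [Finset.mem_range, not_lt] at hi
    simp [ha₁, Nat.not_lt.2 hi]
  have hone : ‖∏' i, (1 + a₂ i)‖ = 1 := na_tprod_norm_one hna hm₂ hδ hδ1 hle₂
  rw [hsplit, norm_mul, hone, mul_one, hfin]
  congr 1
  refine Finset.prod_congr rfl fun i hi => ?_
  simp [ha₁, Finset.mem_range.1 hi]

end NAHelpers

section NADeriv
open Filter Asymptotics
variable {K : Type*} [NontriviallyNormedField K]

lemma na_hasDerivAt_tprod (hna : ∀ x y : K, ‖x + y‖ ≤ max ‖x‖ ‖y‖) [CompleteSpace K]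
    {e : ℕ → K} (he : Tendsto (fun i => ‖e i‖) atTop (nhds 0)) {w₀ : K} {m : ℝ} (hm : 0 < m)
    (hmw : ∀ i, m * ‖e i‖ ≤ ‖1 - w₀ * e i‖) :
    ∃ L, HasDerivAt (fun w : K => ∏' i, (1 - w * e i)) L w₀ ∧
      ‖L‖ ≤ ‖∏' i, (1 - w₀ * e i)‖ / m := by
  classical
  have hne : ∀ i, 1 - w₀ * e i ≠ 0 := by
    intro i
    by_cases h0 : e i = 0
    · simp [h0]
    · have : 0 < ‖1 - w₀ * e i‖ :=
        lt_of_lt_of_le (mul_pos hm (norm_pos_iff.2 h0)) (hmw i)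
      exact norm_pos_iff.1 this
  set b : ℕ → K := fun i => e i / (1 - w₀ * e i) with hbdef
  have hbβ : ∀ i, ‖b i‖ ≤ 1 / m := by
    intro i
    by_cases h0 : e i = 0
    · simp only [hbdef, h0, zero_div, norm_zero]
      positivity
    · have hpos : 0 < ‖1 - w₀ * e i‖ :=
        lt_of_lt_of_le (mul_pos hm (norm_pos_iff.2 h0)) (hmw i)
      rw [hbdef, norm_div, div_le_div_iff₀ hpos hm, one_mul, mul_comm]
      exact hmw i
  have hbt : Tendsto (fun i => ‖b i‖) atTop (nhds 0) := by
    have hev : ∀ᶠ i in atTop, ‖b i‖ ≤ 2 * ‖e i‖ := by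
      have hη : (0:ℝ) < 1 / (2 * (‖w₀‖ + 1)) := by positivity
      filter_upwards [he.eventually (eventually_le_nhds hη)] with i hi
      have hw1 : ‖w₀ * e i‖ ≤ 1 / 2 := by
        rw [norm_mul]
        calc ‖w₀‖ * ‖e i‖ ≤ ‖w₀‖ * (1 / (2 * (‖w₀‖ + 1))) :=
              mul_le_mul_of_nonneg_left hi (norm_nonneg _)
        _ ≤ 1 / 2 := by
            rw [mul_one_div, div_le_div_iff₀ (by positivity) (by norm_num)]
            nlinarith [norm_nonneg w₀]
      have hlow : (1:ℝ) / 2 ≤ ‖1 - w₀ * e i‖ := by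
        have := norm_sub_norm_le (1 : K) (w₀ * e i)
        rw [norm_one] at this
        linarith
      rw [hbdef, norm_div]
      rw [div_le_iff₀ (by linarith)]
      nlinarith [norm_nonneg (e i)]
    refine squeeze_zero' (Eventually.of_forall fun i => norm_nonneg _) hev ?_
    simpa using he.const_mul (2:ℝ)
  have hb : Summable b := na_summable hna hbt
  have hmP : ∀ w : K, Multipliable fun i => 1 - w * e i := by
    intro w
    have ht : Tendsto (fun i => ‖-(w * e i)‖) atTop (nhds 0) := by
      simp only [norm_neg, norm_mul]
      simpa using he.const_mul ‖w‖
    exact (na_multipliable hna ht).congr fun i => by ring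
  have hmE : ∀ x : K, Multipliable fun i => 1 + x * b i := by
    intro x
    refine na_multipliable hna ?_
    simp only [norm_mul]
    simpa using hbt.const_mul ‖x‖
  have key : ∀ w : K, (∏' i, (1 - w * e i))
      = (∏' i, (1 - w₀ * e i)) * ∏' i, (1 + (w₀ - w) * b i) := by
    intro w
    rw [← Multipliable.tprod_mul (hmP w₀) (hmE (w₀ - w))]
    refine tprod_congr fun i => ?_
    have h4 : (1 - w₀ * e i) * ((w₀ - w) * (e i / (1 - w₀ * e i))) = (w₀ - w) * e i := by
      rw [mul_comm, mul_assoc, div_mul_cancel₀ _ (hne i)]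
    rw [hbdef, mul_add, mul_one, h4]
    ring
  set S : K := ∑' i, b i with hSdef
  set P0 : K := ∏' i, (1 - w₀ * e i) with hP0def
  have hSle : ‖S‖ ≤ 1 / m := na_tsum_le hna hb (by positivity) hbβ
  have hder : HasDerivAt (fun w : K => P0 * ∏' i, (1 + (w₀ - w) * b i)) (P0 * (-S)) w₀ := by
    rw [hasDerivAt_iff_isLittleO, isLittleO_iff]
    intro C hC
    rw [Metric.eventually_nhds_iff]
    refine ⟨min m (C * m ^ 2 / (‖P0‖ + 1)), lt_min hm (by positivity), fun w hw => ?_⟩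
    simp only [sub_self, zero_mul, add_zero, tprod_one, mul_one]
    have hx : ‖w₀ - w‖ < min m (C * m ^ 2 / (‖P0‖ + 1)) := by
      rw [dist_eq_norm] at hw
      rwa [norm_sub_rev]
    have hx1 : ‖w₀ - w‖ * (1 / m) ≤ 1 := by
      rw [mul_one_div, div_le_one hm]
      exact le_of_lt (lt_of_lt_of_le hx (min_le_left _ _))
    have htay := na_tprod_taylor hna (by positivity : (0:ℝ) ≤ 1/m) hb hbβ (w₀ - w) hx1
      (hmE (w₀ - w))
    have hre : P0 * (∏' i, (1 + (w₀ - w) * b i)) - P0 - (w - w₀) • (P0 * -S)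
        = P0 * ((∏' i, (1 + (w₀ - w) * b i)) - 1 - (w₀ - w) * S) := by
      rw [smul_eq_mul]
      ring
    rw [hre, norm_mul]
    have h2 : ‖w₀ - w‖ ≤ C * m ^ 2 / (‖P0‖ + 1) :=
      le_of_lt (lt_of_lt_of_le hx (min_le_right _ _))
    have hx2 : ‖P0‖ * ‖w₀ - w‖ ≤ C * m ^ 2 := by
      refine (mul_le_mul_of_nonneg_left h2 (norm_nonneg P0)).trans ?_
      rw [mul_div_assoc']
      rw [div_le_iff₀ (by positivity)]
      nlinarith [hC.le, sq_nonneg m, norm_nonneg P0]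
    have hfin : ‖P0‖ * (‖w₀ - w‖ ^ 2 * (1 / m) ^ 2) ≤ C * ‖w - w₀‖ := by
      rw [norm_sub_rev w w₀]
      calc ‖P0‖ * (‖w₀ - w‖ ^ 2 * (1 / m) ^ 2)
          = (‖P0‖ * ‖w₀ - w‖) * ‖w₀ - w‖ / m ^ 2 := by
            field_simp
      _ ≤ (C * m ^ 2) * ‖w₀ - w‖ / m ^ 2 := by gcongr
      _ = C * ‖w₀ - w‖ := by
            field_simp
    exact le_trans (mul_le_mul_of_nonneg_left htay (norm_nonneg _)) hfin
  refine ⟨P0 * (-S), ?_, ?_⟩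
  · have heq : (fun w : K => ∏' i, (1 - w * e i))
        = fun w : K => P0 * ∏' i, (1 + (w₀ - w) * b i) := funext key
    rw [heq]
    exact hder
  · rw [norm_mul, norm_neg]
    calc ‖P0‖ * ‖S‖ ≤ ‖P0‖ * (1 / m) := mul_le_mul_of_nonneg_left hSle (norm_nonneg _)
    _ = ‖P0‖ / m := by ring

end NADeriv

section PhiHelpers
open Filter
variable {p : ℕ} {R : ℕ → ℝ}

lemma radii_mono (hR : IsRadii p R) {i i' : ℕ} (h1 : 1 ≤ i) (h2 : i ≤ i') : R i ≤ R i' := by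
  induction i' with
  | zero => omega
  | succ n ih =>
    rcases Nat.lt_or_ge i (n+1) with h | h
    · have hn : 1 ≤ n := by omega
      exact (ih (by omega)).trans (hR.1 n hn).le
    · have h3 : i = n + 1 := by omega
      simp [h3]

lemma radii_strict (hR : IsRadii p R) {i i' : ℕ} (h1 : 1 ≤ i) (h2 : i < i') : R i < R i' :=
  lt_of_lt_of_le (hR.1 i h1) (radii_mono hR (by omega) h2)

lemma radii_pos (hp : 2 ≤ p) (hR : IsRadii p R) {i : ℕ} (h1 : 1 ≤ i) : 0 < R i := by
  have h2 : (2:ℝ) ≤ (p:ℝ) := by exact_mod_cast hp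
  have h3 := hR.2.1
  have h4 := radii_mono hR le_rfl h1
  linarith

lemma rho_pos (hp : 2 ≤ p) : 0 < rho p :=
  Real.rpow_pos_of_pos (by exact_mod_cast Nat.lt_of_lt_of_le Nat.zero_lt_two hp) _

lemma rho_lt_one (hp : 2 ≤ p) : rho p < 1 := by
  have h1 : (1:ℝ) < (p:ℝ) := by exact_mod_cast Nat.lt_of_lt_of_le Nat.one_lt_two hp
  refine Real.rpow_lt_one_of_one_lt_of_neg h1 ?_
  have : (0:ℝ) < (p:ℝ) - 1 := by linarith
  exact div_neg_of_neg_of_pos (by norm_num) this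

lemma rho_pow (hp : 2 ≤ p) : rho p ^ (p - 1) = (p:ℝ)⁻¹ := by
  have hp0 : (0:ℝ) < (p:ℝ) := by exact_mod_cast Nat.lt_of_lt_of_le Nat.zero_lt_two hp
  have hcast : ((p - 1 : ℕ) : ℝ) = (p:ℝ) - 1 := by
    push_cast [Nat.cast_sub (by omega : 1 ≤ p)]
    ring
  rw [rho, ← Real.rpow_natCast ((p:ℝ) ^ (-1 / ((p:ℝ) - 1))) (p - 1),
    ← Real.rpow_mul hp0.le, hcast]
  have hne : (p:ℝ) - 1 ≠ 0 := by
    have : (2:ℝ) ≤ (p:ℝ) := by exact_mod_cast hp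
    linarith
  have : -1 / ((p:ℝ) - 1) * ((p:ℝ) - 1) = -1 := by field_simp
  rw [this, Real.rpow_neg_one]

lemma sInf_radii_eq (hR : IsRadii p R) {t : ℝ} {k : ℕ} (hk1 : 1 ≤ k) (hk2 : t ≤ R k)
    (hk3 : ∀ i, 1 ≤ i → i < k → R i < t) :
    sInf {j : ℕ | 1 ≤ j ∧ t ≤ R j} = k := by
  have hmem : k ∈ {j : ℕ | 1 ≤ j ∧ t ≤ R j} := ⟨hk1, hk2⟩
  have hne : {j : ℕ | 1 ≤ j ∧ t ≤ R j}.Nonempty := ⟨k, hmem⟩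
  have h1 := Nat.sInf_mem hne
  have h2 := Nat.sInf_le hmem
  rcases Nat.lt_or_ge (sInf {j : ℕ | 1 ≤ j ∧ t ≤ R j}) k with h | h
  · exfalso
    have := hk3 _ h1.1 h
    exact absurd h1.2 (not_le.2 this)
  · omega

lemma phi_eval (hR : IsRadii p R) {t : ℝ} {k : ℕ} (hk1 : 1 ≤ k) (hk2 : t ≤ R k)
    (hk3 : ∀ i, 1 ≤ i → i < k → R i < t) :
    phi p R t = (p : ℝ) * (∏ i ∈ Finset.Icc 1 (k - 1), R i)⁻¹ * t ^ (p + k - 1) := by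
  rw [phi, sInf_radii_eq hR hk1 hk2 hk3]

lemma phi_gt (hp : 2 ≤ p) (hR : IsRadii p R) {t : ℝ} (ht : rho p < t) : t < phi p R t := by
  have ht0 : 0 < t := lt_trans (rho_pos hp) ht
  have hne : {j : ℕ | 1 ≤ j ∧ t ≤ R j}.Nonempty := by
    have := (tendsto_atTop.1 hR.2.2 t).and (eventually_ge_atTop 1)
    rcases this.exists with ⟨i, hi1, hi2⟩
    exact ⟨i, hi2, hi1⟩
  set k := sInf {j : ℕ | 1 ≤ j ∧ t ≤ R j} with hkdef
  have hmem := Nat.sInf_mem hne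
  have hk1 : 1 ≤ k := hmem.1
  have hk2 : t ≤ R k := hmem.2
  have hk3 : ∀ i, 1 ≤ i → i < k → R i < t := by
    intro i h1 h2
    have : i ∉ {j : ℕ | 1 ≤ j ∧ t ≤ R j} := Nat.notMem_of_lt_sInf h2
    simp only [Set.mem_setOf_eq, not_and, not_le] at this
    exact this h1
  have heval : phi p R t = (p : ℝ) * (∏ i ∈ Finset.Icc 1 (k - 1), R i)⁻¹ * t ^ (p + k - 1) := by
    rw [phi]
  have hprodle : ∏ i ∈ Finset.Icc 1 (k - 1), R i ≤ t ^ (k - 1) := by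
    have hcard : (Finset.Icc 1 (k - 1)).card = k - 1 := by
      rw [Nat.card_Icc]
      omega
    have hb : ∏ i ∈ Finset.Icc 1 (k - 1), R i ≤ ∏ _i ∈ Finset.Icc 1 (k - 1), t := by
      refine Finset.prod_le_prod (fun i hi => ?_) (fun i hi => ?_)
      · exact (radii_pos hp hR (Finset.mem_Icc.1 hi).1).le
      · rcases Finset.mem_Icc.1 hi with ⟨ha, hb2⟩
        exact (hk3 i ha (by omega)).le
    rwa [Finset.prod_const, hcard] at hb
  have hprodpos : 0 < ∏ i ∈ Finset.Icc 1 (k - 1), R i := by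
    refine Finset.prod_pos fun i hi => ?_
    rcases Finset.mem_Icc.1 hi with ⟨ha, _⟩
    exact radii_pos hp hR ha
  have hp0 : (0:ℝ) < (p:ℝ) := by exact_mod_cast Nat.lt_of_lt_of_le Nat.zero_lt_two hp
  have hinv : (t ^ (k - 1))⁻¹ ≤ (∏ i ∈ Finset.Icc 1 (k - 1), R i)⁻¹ :=
    inv_anti₀ hprodpos hprodle
  have hpow : t ^ (p + k - 1) = t ^ p * t ^ (k - 1) := by
    rw [← pow_add]
    congr 1
    omega
  have hstep1 : (p:ℝ) * t ^ p ≤ phi p R t := by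
    rw [heval, hpow]
    calc (p:ℝ) * t ^ p = (p:ℝ) * (t ^ (k-1))⁻¹ * (t ^ p * t ^ (k - 1)) := by
          field_simp
    _ ≤ (p:ℝ) * (∏ i ∈ Finset.Icc 1 (k - 1), R i)⁻¹ * (t ^ p * t ^ (k - 1)) := by
          have hnn : (0:ℝ) ≤ t ^ p * t ^ (k - 1) := by positivity
          exact mul_le_mul_of_nonneg_right (mul_le_mul_of_nonneg_left hinv hp0.le) hnn
  refine lt_of_lt_of_le ?_ hstep1
  have hppow : rho p ^ (p - 1) < t ^ (p - 1) :=
    pow_lt_pow_left₀ ht (rho_pos hp).le (by omega)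
  rw [rho_pow hp] at hppow
  have h5 : (1:ℝ) < (p:ℝ) * t ^ (p - 1) := by
    have := mul_lt_mul_of_pos_left hppow hp0
    rwa [mul_inv_cancel₀ (ne_of_gt hp0)] at this
  have h6 : t ^ p = t ^ (p - 1) * t := by
    rw [← pow_succ]
    congr 1
    omega
  calc t = 1 * t := (one_mul t).symm
  _ < ((p:ℝ) * t ^ (p - 1)) * t := by
      exact mul_lt_mul_of_pos_right h5 ht0
  _ = (p:ℝ) * t ^ p := by rw [h6]; ring

lemma phi_gt_rho (hp : 2 ≤ p) (hR : IsRadii p R) {t : ℝ} (ht : rho p < t) :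
    rho p < phi p R t := lt_trans ht (phi_gt hp hR ht)

lemma phi_iter_gt_rho (hp : 2 ≤ p) (hR : IsRadii p R) {t : ℝ} (ht : rho p < t) (n : ℕ) :
    rho p < (phi p R)^[n] t := by
  induction n with
  | zero => simpa
  | succ n ih =>
    rw [Function.iterate_succ_apply']
    exact phi_gt_rho hp hR ih

lemma phi_iter_mono (hp : 2 ≤ p) (hR : IsRadii p R) {t : ℝ} (ht : rho p < t) (n : ℕ) :
    (phi p R)^[n] t < (phi p R)^[n + 1] t := by
  rw [Function.iterate_succ_apply']
  exact phi_gt hp hR (phi_iter_gt_rho hp hR ht n)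

end PhiHelpers

lemma prod_Icc_one_eq {f : ℕ → ℝ} (n : ℕ) :
    ∏ i ∈ Finset.Icc 1 n, f i = ∏ i ∈ Finset.range n, f (i + 1) := by
  induction n with
  | zero => simp
  | succ n ih => rw [Finset.prod_Icc_succ_top (by omega), ih, Finset.prod_range_succ]

section RegionHelpers
open Filter
variable {K : Type*} [NormedField K]

lemma e_tendsto {p : ℕ} {R : ℕ → ℝ} (hp : 2 ≤ p) (hR : IsRadii p R) {c : ℕ → K}
    (hc : ∀ i, 1 ≤ i → ‖c i‖ = R i) {e : ℕ → K} {j : ℕ}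
    (he : ∀ i, e i = (c (i+1))⁻¹ ∨ (e i = 0 ∧ i + 1 = j)) (w : K) :
    Tendsto (fun i => ‖-(w * e i)‖) atTop (nhds 0) := by
  have hRt : Tendsto (fun i : ℕ => (R (i + 1))⁻¹) atTop (nhds 0) := by
    refine Tendsto.inv_tendsto_atTop ?_
    exact hR.2.2.comp (tendsto_add_atTop_nat 1)
  have hb : Tendsto (fun i : ℕ => ‖w‖ * (R (i + 1))⁻¹) atTop (nhds 0) := by
    simpa using hRt.const_mul ‖w‖
  refine squeeze_zero (fun i => norm_nonneg _) (fun i => ?_) hb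
  rcases he i with h | ⟨h, _⟩
  · rw [norm_neg, norm_mul, h, norm_inv, hc (i+1) (by omega)]
  · rw [h]
    simp only [mul_zero, norm_neg, norm_zero]
    exact mul_nonneg (norm_nonneg _) (inv_nonneg.2 (radii_pos hp hR (by omega)).le)

/-- Exact norm of the region products. -/

lemma norm_tprod_region {p : ℕ} {R : ℕ → ℝ} (hp : 2 ≤ p)
    (hna : ∀ x y : K, ‖x + y‖ ≤ max ‖x‖ ‖y‖) [CompleteSpace K] (hR : IsRadii p R) {c : ℕ → K}
    (hc : ∀ i, 1 ≤ i → ‖c i‖ = R i) {j : ℕ} (hj : 1 ≤ j) {w : K}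
    (hwR : ‖w‖ < R j) (hreg : ∀ i, 1 ≤ i → i < j → R i ≤ ‖w - c i‖)
    {e : ℕ → K} (he : ∀ i, e i = (c (i+1))⁻¹ ∨ (e i = 0 ∧ i + 1 = j))
    {k : ℕ} (hk1 : 1 ≤ k) (hkj : k ≤ j) (hk2 : ‖w‖ ≤ R k)
    (hk3 : ∀ i, 1 ≤ i → i < k → R i < ‖w‖) :
    ‖∏' i, (1 - w * e i)‖ = ∏ i ∈ Finset.range (k - 1), (‖w‖ / R (i + 1)) := by
  classical
  have hRpos : ∀ i : ℕ, 1 ≤ i → 0 < R i := fun i hi => radii_pos hp hR hi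
  have hcongr : (∏' i, (1 - w * e i)) = ∏' i, (1 + -(w * e i)) :=
    tprod_congr fun i => by ring
  have hat := e_tendsto hp hR hc he w
  set δ : ℝ := ‖w‖ / R (k + 1) with hδdef
  have hRk1 : 0 < R (k + 1) := hRpos _ (by omega)
  have hδ0 : 0 ≤ δ := div_nonneg (norm_nonneg _) hRk1.le
  have hδ1 : δ < 1 := by
    rw [hδdef, div_lt_one hRk1]
    exact lt_of_le_of_lt hk2 (radii_strict hR hk1 (by omega))
  have hsplit : ‖∏' i, (1 + -(w * e i))‖ = ‖∏ i ∈ Finset.range k, (1 + -(w * e i))‖ := by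
    refine na_tprod_norm_split hna hat k hδ0 hδ1 fun i hi => ?_
    have hR1 : R (k + 1) ≤ R (i + 1) := radii_mono hR (by omega) (by omega)
    rcases he i with h | ⟨h, _⟩
    · rw [norm_neg, norm_mul, h, norm_inv, hc (i+1) (by omega)]
      rw [hδdef]
      refine div_le_div_of_nonneg_left (norm_nonneg w) ?_ hR1 |>.trans_eq ?_
      · exact hRk1
      · rw [div_eq_mul_inv]
    · rw [h]
      simpa using hδ0
  have hfac : ∀ i, i < k → ‖1 - w * e i‖
      = if i + 1 < k then ‖w‖ / R (i + 1) else 1 := by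
    intro i hik
    by_cases hlt : i + 1 < k
    · rw [if_pos hlt]
      rcases he i with h | ⟨h, hji⟩
      · have hc0 : c (i+1) ≠ 0 := by
          have := hRpos (i+1) (by omega)
          rw [← hc (i+1) (by omega)] at this
          exact norm_pos_iff.1 this
        have hid : (1 : K) - w * (c (i+1))⁻¹ = (c (i+1) - w) * (c (i+1))⁻¹ := by
          field_simp
        rw [h, hid, norm_mul, norm_inv, hc (i+1) (by omega)]
        have hRlt : R (i + 1) < ‖w‖ := hk3 (i+1) (by omega) hlt
        have : ‖c (i+1) - w‖ = ‖w‖ := by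
          rw [norm_sub_rev]
          refine na_sub_eq_left hna ?_
          rw [hc (i+1) (by omega)]
          exact hRlt
        rw [this, div_eq_mul_inv]
      · exfalso
        omega
    · rw [if_neg hlt]
      have hik1 : i + 1 = k := by omega
      rcases he i with h | ⟨h, _⟩
      · have hc0 : c (i+1) ≠ 0 := by
          have := hRpos (i+1) (by omega)
          rw [← hc (i+1) (by omega)] at this
          exact norm_pos_iff.1 this
        rcases lt_or_eq_of_le (hik1 ▸ hk2 : ‖w‖ ≤ R (i+1)) with hwlt | hweq
        · rw [h]
          refine na_one_sub hna ?_
          rw [norm_mul, norm_inv, hc (i+1) (by omega)]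
          rw [mul_inv_lt_iff₀ (hRpos (i+1) (by omega)), one_mul]
          exact hwlt
        · -- ‖w‖ = R k; then k < j and the region hypothesis gives ‖w - c k‖ = R k
          have hkj' : k < j := by
            rcases lt_or_eq_of_le hkj with h' | h'
            · exact h'
            · exfalso
              rw [hik1, h'] at hweq
              exact absurd hwR (not_lt.2 hweq.ge)
          have hge : R (i+1) ≤ ‖w - c (i+1)‖ := by
            rw [hik1]
            exact hreg k hk1 hkj'
          have hle : ‖w - c (i+1)‖ ≤ R (i+1) := by
            have h1 : ‖w - c (i+1)‖ = ‖w + -(c (i+1))‖ := by rw [sub_eq_add_neg]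
            rw [h1]
            refine (hna _ _).trans (max_le ?_ ?_)
            · exact hweq.le
            · rw [norm_neg, hc (i+1) (by omega)]
          have heq2 : ‖w - c (i+1)‖ = R (i+1) := le_antisymm hle hge
          have hid : (1 : K) - w * (c (i+1))⁻¹ = (c (i+1) - w) * (c (i+1))⁻¹ := by
            field_simp
          rw [h, hid, norm_mul, norm_inv, hc (i+1) (by omega), norm_sub_rev, heq2]
          rw [mul_inv_cancel₀ (ne_of_gt (hRpos (i+1) (by omega)))]
      · rw [h]
        simp
  have hfin : ‖∏ i ∈ Finset.range k, (1 + -(w * e i))‖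
      = ∏ i ∈ Finset.range (k - 1), (‖w‖ / R (i + 1)) := by
    have hcg : ∀ i, (1 + -(w * e i)) = (1 - w * e i) := fun i => by ring
    rw [Finset.prod_congr rfl fun i _ => hcg i, norm_prod]
    have hks : k = (k - 1) + 1 := by omega
    rw [hks, Finset.prod_range_succ]
    have hlast : ‖1 - w * e (k - 1)‖ = 1 := by
      rw [hfac (k-1) (by omega)]
      rw [if_neg (by omega)]
    rw [hlast, mul_one]
    refine Finset.prod_congr rfl fun i hi => ?_
    have hik : i < k - 1 := Finset.mem_range.1 hi
    rw [hfac i (by omega), if_pos (by omega)]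
  rw [hcongr, hsplit, hfin]

end RegionHelpers

section StepHelpers
open Filter
variable {K : Type*} [NontriviallyNormedField K]

set_option maxHeartbeats 1000000 in
lemma step_hasDerivAt {p : ℕ} (hp : 2 ≤ p)
    (hna : ∀ x y : K, ‖x + y‖ ≤ max ‖x‖ ‖y‖) [CompleteSpace K]
    (hnp : ‖(p : K)‖ = (p : ℝ)⁻¹)
    {R : ℕ → ℝ} (hR : IsRadii p R) {c : ℕ → K} (hc : ∀ i, 1 ≤ i → ‖c i‖ = R i)
    {j : ℕ} (hj : 1 ≤ j) {w₀ : K} (hw0 : 0 < ‖w₀‖) (hwR : ‖w₀‖ < R j)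
    (hreg : ∀ i, 1 ≤ i → i < j → R i ≤ ‖w₀ - c i‖)
    {h : K → K} {D : K} (hh : HasDerivAt h D (c j)) (hh0 : h (c j) = w₀) :
    ∃ Dc Dp : K,
      HasDerivAt (fun t => fc p (Function.update c j t) (h t)) (Dc * D + Dp) (c j) ∧
      ‖Dc‖ ≤ phi p R ‖w₀‖ / ‖w₀‖ ∧ ‖Dp‖ = phi p R ‖w₀‖ * ‖w₀‖ / R j ^ 2 ∧
      ‖fc p c w₀‖ = phi p R ‖w₀‖ := by
  classical
  have hRpos : ∀ i : ℕ, 1 ≤ i → 0 < R i := fun i hi => radii_pos hp hR hi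
  have hRj : ‖c j‖ = R j := hc j hj
  have hRjpos : 0 < R j := hRpos j hj
  have hcj0 : c j ≠ 0 := by
    rw [← norm_pos_iff, hRj]; exact hRjpos
  -- the index k
  have hSne : ({i : ℕ | 1 ≤ i ∧ ‖w₀‖ ≤ R i}).Nonempty := ⟨j, hj, hwR.le⟩
  set k : ℕ := sInf {i : ℕ | 1 ≤ i ∧ ‖w₀‖ ≤ R i} with hkdef
  have hkmem := Nat.sInf_mem hSne
  have hk1 : 1 ≤ k := hkmem.1
  have hk2 : ‖w₀‖ ≤ R k := hkmem.2
  have hkj : k ≤ j := Nat.sInf_le ⟨hj, hwR.le⟩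
  have hk3 : ∀ i, 1 ≤ i → i < k → R i < ‖w₀‖ := by
    intro i h1 h2
    have : i ∉ {i : ℕ | 1 ≤ i ∧ ‖w₀‖ ≤ R i} := Nat.notMem_of_lt_sInf h2
    simp only [Set.mem_setOf_eq, not_and, not_le] at this
    exact this h1
  -- minimal distance to the lattice points
  have hmin : ∀ i, 1 ≤ i → ‖w₀‖ ≤ ‖w₀ - c i‖ := by
    intro i h1
    rcases lt_trichotomy ‖w₀‖ (R i) with hlt | heq | hgt
    · rw [norm_sub_rev, na_sub_eq_left hna (by rw [hRj] at *; rw [hc i h1]; exact hlt),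
        hc i h1]
      exact hlt.le
    · have hij : i < j := by
        by_contra h'
        push_neg at h'
        have := radii_mono hR hj h'
        rw [heq] at hwR
        linarith
      rw [heq]
      exact hreg i h1 hij
    · rw [na_sub_eq_left hna (by rw [hc i h1]; exact hgt)]
  -- the families of inverse roots
  set e : ℕ → K := fun i => if i + 1 = j then 0 else (c (i+1))⁻¹ with hedef
  have he : ∀ i, e i = (c (i+1))⁻¹ ∨ (e i = 0 ∧ i + 1 = j) := by
    intro i
    by_cases hij : i + 1 = j
    · right; exact ⟨by simp [hedef, hij], hij⟩
    · left; simp [hedef, hij]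
  set eP : ℕ → K := fun i => (c (i+1))⁻¹ with hePdef
  have heP : ∀ i, eP i = (c (i+1))⁻¹ ∨ (eP i = 0 ∧ i + 1 = j) := fun i => Or.inl rfl
  set Qf : K → K := fun w => ∏' i, (1 - w * e i) with hQdef
  -- norms of the region products
  have hnQ : ‖Qf w₀‖ = ∏ i ∈ Finset.range (k - 1), (‖w₀‖ / R (i + 1)) :=
    norm_tprod_region hp hna hR hc hj hwR hreg he hk1 hkj hk2 hk3
  have hnP : ‖∏' i, (1 - w₀ * eP i)‖ = ∏ i ∈ Finset.range (k - 1), (‖w₀‖ / R (i + 1)) :=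
    norm_tprod_region hp hna hR hc hj hwR hreg heP hk1 hkj hk2 hk3
  -- φ(‖w₀‖) in terms of ‖Q₀‖
  have hphi : phi p R ‖w₀‖ = (p : ℝ) * ‖w₀‖ ^ p * ‖Qf w₀‖ := by
    rw [phi_eval hR hk1 hk2 hk3, hnQ]
    rw [Finset.prod_div_distrib, Finset.prod_const, Finset.card_range, prod_Icc_one_eq]
    have hpow : ‖w₀‖ ^ (p + k - 1) = ‖w₀‖ ^ p * ‖w₀‖ ^ (k - 1) := by
      rw [← pow_add]; congr 1; omega
    rw [hpow, div_eq_mul_inv]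
    ring
  have hphipos : 0 < phi p R ‖w₀‖ := by
    rw [hphi, hnQ]
    have : ∀ i ∈ Finset.range (k - 1), 0 < ‖w₀‖ / R (i + 1) := fun i _ =>
      div_pos hw0 (hRpos (i+1) (by omega))
    have hprodpos : 0 < ∏ i ∈ Finset.range (k - 1), (‖w₀‖ / R (i + 1)) :=
      Finset.prod_pos this
    have hppos : (0:ℝ) < (p:ℝ) := by exact_mod_cast (by omega : 0 < p)
    rw [hnQ] at *
    positivity
  -- derivative of Qf
  have heT : Tendsto (fun i => ‖e i‖) atTop (nhds 0) := by
    have := e_tendsto hp hR hc he (1 : K)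
    simpa using this
  have hmw : ∀ i, ‖w₀‖ * ‖e i‖ ≤ ‖1 - w₀ * e i‖ := by
    intro i
    rcases he i with hcase | ⟨hcase, _⟩
    · have hc0 : c (i+1) ≠ 0 := by
        rw [← norm_pos_iff, hc (i+1) (by omega)]
        exact hRpos (i+1) (by omega)
      have hid : (1 : K) - w₀ * (c (i+1))⁻¹ = (c (i+1) - w₀) * (c (i+1))⁻¹ := by
        field_simp
      rw [hcase, hid, norm_mul, norm_inv, hc (i+1) (by omega)]
      refine mul_le_mul_of_nonneg_right ?_ (inv_nonneg.2 (hRpos (i+1) (by omega)).le)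
      rw [norm_sub_rev]
      exact hmin (i+1) (by omega)
    · rw [hcase]
      simp
  obtain ⟨LQ, hLQ, hLQn⟩ := na_hasDerivAt_tprod hna heT hw0 hmw
  -- derivative of A
  set A : K → K := fun w => w ^ p / (p : K) * Qf w with hAdef
  have hp0K : (p : K) ≠ 0 := by
    rw [← norm_pos_iff, hnp]
    have : (0:ℝ) < (p:ℝ) := by exact_mod_cast (by omega : 0 < p)
    positivity
  have hADer : HasDerivAt A (((p:K) * w₀ ^ (p - 1) / (p : K)) * Qf w₀ + w₀ ^ p / (p : K) * LQ)
      w₀ := ((hasDerivAt_pow p w₀).div_const ((p : K))).mul hLQ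
  set LA : K := ((p:K) * w₀ ^ (p - 1) / (p : K)) * Qf w₀ + w₀ ^ p / (p : K) * LQ with hLAdef
  have hnormApow : ‖w₀ ^ p / (p : K)‖ = ‖w₀‖ ^ p * (p:ℝ) := by
    rw [norm_div, norm_pow, hnp, div_eq_mul_inv, inv_inv]
  have hnormA : ‖A w₀‖ = phi p R ‖w₀‖ := by
    rw [hAdef]
    simp only []
    rw [norm_mul, hnormApow, hphi]
    ring
  have hpowsplit : ‖w₀‖ ^ p = ‖w₀‖ ^ (p - 1) * ‖w₀‖ := by
    rw [← pow_succ]; congr 1; omega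
  have hLAn : ‖LA‖ ≤ phi p R ‖w₀‖ / ‖w₀‖ := by
    have hterm1 : ‖((p:K) * w₀ ^ (p - 1) / (p : K)) * Qf w₀‖ = ‖w₀‖ ^ (p-1) * ‖Qf w₀‖ := by
      have hsimp : (p:K) * w₀ ^ (p - 1) / (p : K) = w₀ ^ (p - 1) := by
        rw [mul_comm, mul_div_assoc, div_self hp0K, mul_one]
      rw [hsimp, norm_mul, norm_pow]
    have hterm2 : ‖w₀ ^ p / (p : K) * LQ‖ ≤ (p:ℝ) * ‖w₀‖ ^ (p - 1) * ‖Qf w₀‖ := by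
      rw [norm_mul, hnormApow]
      calc ‖w₀‖ ^ p * (p:ℝ) * ‖LQ‖ ≤ ‖w₀‖ ^ p * (p:ℝ) * (‖Qf w₀‖ / ‖w₀‖) := by
            refine mul_le_mul_of_nonneg_left hLQn ?_
            have : (0:ℝ) ≤ (p:ℝ) := by positivity
            positivity
      _ = (p:ℝ) * ‖w₀‖ ^ (p - 1) * ‖Qf w₀‖ := by
            rw [hpowsplit]
            field_simp
    have hbound : phi p R ‖w₀‖ / ‖w₀‖ = (p:ℝ) * ‖w₀‖ ^ (p - 1) * ‖Qf w₀‖ := by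
      rw [hphi, hpowsplit]
      field_simp
    rw [hbound, hLAdef]
    refine (hna _ _).trans (max_le ?_ ?_)
    · rw [hterm1]
      have hp1 : (1:ℝ) ≤ (p:ℝ) := by exact_mod_cast (by omega : 1 ≤ p)
      nlinarith [norm_nonneg (Qf w₀), pow_nonneg (norm_nonneg w₀) (p-1),
        mul_nonneg (pow_nonneg (norm_nonneg w₀) (p-1)) (norm_nonneg (Qf w₀))]
    · exact hterm2
  -- the function identity on the ball around c j
  have hball : ∀ t : K, dist t (c j) < R j → ∀ v : K,
      fc p (Function.update c j t) v = A v * (1 - v * t⁻¹) := by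
    intro t ht v
    have hnt : ‖t‖ = R j := by
      have h1 : t = (t - c j) + c j := by ring
      rw [h1, na_add_eq hna (by rw [hRj]; rwa [dist_eq_norm] at ht), hRj]
    have ht0 : t ≠ 0 := by
      rw [← norm_pos_iff, hnt]; exact hRjpos
    have hm1 : Multipliable fun i => 1 - v * e i := by
      have := na_multipliable hna (e_tendsto hp hR hc he v)
      exact this.congr fun i => by ring
    have hm2 : Multipliable fun i : ℕ => if i = j - 1 then (1 - v * t⁻¹) else 1 :=
      ⟨_, hasProd_single (j - 1) fun b hb => if_neg hb⟩
    have hfactor : ∀ i : ℕ, (1 - v / Function.update c j t (i+1))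
        = (1 - v * e i) * (if i = j - 1 then (1 - v * t⁻¹) else 1) := by
      intro i
      by_cases hij : i + 1 = j
      · have hij' : i = j - 1 := by omega
        rw [if_pos hij', hij, Function.update_self]
        have he0 : e i = 0 := by simp [hedef, hij]
        rw [he0, div_eq_mul_inv]
        ring
      · have hij' : i ≠ j - 1 := by omega
        rw [if_neg hij', Function.update_of_ne hij, mul_one]
        have he1 : e i = (c (i+1))⁻¹ := by simp [hedef, hij]
        rw [he1, div_eq_mul_inv]
    rw [fc]
    rw [tprod_congr hfactor, Multipliable.tprod_mul hm1 hm2, tprod_eq_mulSingle (j-1) (fun b hb => if_neg hb),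
      if_pos rfl, hAdef]
    ring
  -- assemble the derivative
  have hADer' : HasDerivAt A LA (h (c j)) := by rw [hh0]; exact hADer
  have hu : HasDerivAt (fun t => A (h t)) (LA * D) (c j) := by
    have := HasDerivAt.comp (c j) hADer' hh
    exact this
  have hinv : HasDerivAt (fun t : K => t⁻¹) (-((c j) ^ 2)⁻¹) (c j) := hasDerivAt_inv hcj0
  have hmulv : HasDerivAt (fun t => h t * t⁻¹)
      (D * (c j)⁻¹ + h (c j) * -((c j) ^ 2)⁻¹) (c j) := hh.mul hinv
  have hv : HasDerivAt (fun t => 1 - h t * t⁻¹)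
      (-(D * (c j)⁻¹ + h (c j) * -((c j) ^ 2)⁻¹)) (c j) := hmulv.const_sub 1
  have hG : HasDerivAt (fun t => A (h t) * (1 - h t * t⁻¹))
      ((LA * D) * (1 - h (c j) * (c j)⁻¹)
        + A (h (c j)) * -(D * (c j)⁻¹ + h (c j) * -((c j) ^ 2)⁻¹)) (c j) := hu.mul hv
  set Dc : K := LA * (1 - w₀ * (c j)⁻¹) - A w₀ * (c j)⁻¹ with hDcdef
  set Dp : K := A w₀ * w₀ * (((c j) ^ 2)⁻¹) with hDpdef
  have hGval : (LA * D) * (1 - h (c j) * (c j)⁻¹)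
      + A (h (c j)) * -(D * (c j)⁻¹ + h (c j) * -((c j) ^ 2)⁻¹) = Dc * D + Dp := by
    rw [hh0, hDcdef, hDpdef]
    ring
  rw [hGval] at hG
  have hfinal : HasDerivAt (fun t => fc p (Function.update c j t) (h t)) (Dc * D + Dp)
      (c j) := by
    refine hG.congr_of_eventuallyEq ?_
    rw [Filter.eventuallyEq_iff_exists_mem]
    refine ⟨Metric.ball (c j) (R j), Metric.ball_mem_nhds _ hRjpos, fun t ht => ?_⟩
    exact hball t (Metric.mem_ball.1 ht) (h t)
  -- norms of Dc and Dp
  have hone : ‖1 - w₀ * (c j)⁻¹‖ = 1 := by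
    refine na_one_sub hna ?_
    rw [norm_mul, norm_inv, hRj]
    rw [mul_inv_lt_iff₀ hRjpos, one_mul]
    exact hwR
  have hDcn : ‖Dc‖ ≤ phi p R ‖w₀‖ / ‖w₀‖ := by
    rw [hDcdef, sub_eq_add_neg]
    refine (hna _ _).trans (max_le ?_ ?_)
    · rw [norm_mul, hone, mul_one]
      exact hLAn
    · rw [norm_neg, norm_mul, norm_inv, hRj, hnormA]
      rw [div_eq_mul_inv (phi p R ‖w₀‖)]
      refine mul_le_mul_of_nonneg_left ?_ hphipos.le
      exact inv_anti₀ hw0 hwR.le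
  have hDpn : ‖Dp‖ = phi p R ‖w₀‖ * ‖w₀‖ / R j ^ 2 := by
    rw [hDpdef, norm_mul, norm_mul, norm_inv, norm_pow, hRj, hnormA, div_eq_mul_inv]
  -- the norm of fc p c w₀
  have hfc : ‖fc p c w₀‖ = phi p R ‖w₀‖ := by
    rw [fc]
    have hcongr : (∏' i : ℕ, (1 - w₀ / c (i+1))) = ∏' i, (1 - w₀ * eP i) :=
      tprod_congr fun i => by rw [hePdef, div_eq_mul_inv]
    rw [hcongr, norm_mul, hnormApow, hnP, ← hnQ, hphi]
    ring
  exact ⟨Dc, Dp, hfinal, hDcn, hDpn, hfc⟩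

end StepHelpers

/-- **Corollary 5.5.** If `|z| > ϱ` and the first `N` iterates of `z` under `f_c` stay in
`{|w| < R_j} \ (B_1 ∪ ⋯ ∪ B_{j-1})`, then
`|∂_j f_c^{∘N}(z)| = φ^{∘N}(|z|) φ^{∘(N-1)}(|z|) / R_j²`. -/
theorem partial_deriv_iterate
    (p : ℕ) [Fact p.Prime] (K : Type*) [NontriviallyNormedField K] [Algebra ℚ_[p] K]
    (hK : IsCp p K) (R : ℕ → ℝ) (hR : IsGenericRadii p R)
    (c : ℕ → K) (hc : InC p R c) (j N : ℕ) (hj : 1 ≤ j) (hN : 1 ≤ N)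
    (z : K) (hz : rho p < ‖z‖)
    (horb : ∀ n, n < N → ‖(fc p c)^[n] z‖ < R j ∧
      ∀ i, 1 ≤ i → i < j → (fc p c)^[n] z ∉ Bset R c i) :
    ‖deriv (fun t : K => (fc p (Function.update c j t))^[N] z) (c j)‖ =
      (phi p R)^[N] ‖z‖ * (phi p R)^[N - 1] ‖z‖ / R j ^ 2 := by
  classical
  haveI : CompleteSpace K := hK.complete
  have hna := hK.isNonarch
  have hp2 : 2 ≤ p := (Fact.out : p.Prime).two_le
  have hnp : ‖(p : K)‖ = (p : ℝ)⁻¹ := by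
    have h2 : (p : K) = algebraMap ℚ_[p] K ((p : ℕ) : ℚ_[p]) := by
      rw [map_natCast]
    rw [h2, hK.norm_extends, Padic.norm_p]
  have hRad : IsRadii p R := hR.1
  have hrho := rho_pos hp2
  have hreg : ∀ n, n < N → ∀ i, 1 ≤ i → i < j → R i ≤ ‖(fc p c)^[n] z - c i‖ := by
    intro n hn i h1 h2
    have hB := (horb n hn).2 i h1 h2
    rw [Bset, if_neg (by omega : ¬ i = 0)] at hB
    simp only [Set.mem_setOf_eq, not_lt] at hB
    exact hB
  have main : ∀ n, n ≤ N → ‖(fc p c)^[n] z‖ = (phi p R)^[n] ‖z‖ ∧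
      ∃ D : K, HasDerivAt (fun t : K => (fc p (Function.update c j t))^[n] z) D (c j) ∧
        ((n = 0 ∧ D = 0) ∨
          (1 ≤ n ∧ ‖D‖ = (phi p R)^[n] ‖z‖ * (phi p R)^[n - 1] ‖z‖ / R j ^ 2)) := by
    intro n
    induction n with
    | zero =>
      intro _
      exact ⟨rfl, 0, hasDerivAt_const _ _, Or.inl ⟨rfl, rfl⟩⟩
    | succ n ih =>
      intro hn1
      obtain ⟨hwn, D, hD, hDn⟩ := ih (by omega)
      have hnN : n < N := by omega
      have hh0 : (fun t : K => (fc p (Function.update c j t))^[n] z) (c j)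
          = (fc p c)^[n] z := by
        simp only [Function.update_eq_self]
      have hw0 : 0 < ‖(fc p c)^[n] z‖ := by
        rw [hwn]
        exact lt_trans hrho (phi_iter_gt_rho hp2 hRad hz n)
      obtain ⟨Dc, Dp, hder, hDc, hDp, hfcn⟩ := step_hasDerivAt hp2 hna hnp hRad hc hj hw0
        (horb n hnN).1 (hreg n hnN) hD hh0
      have hΦ1 : phi p R ‖(fc p c)^[n] z‖ = (phi p R)^[n + 1] ‖z‖ := by
        rw [hwn]
        exact (Function.iterate_succ_apply' (phi p R) n ‖z‖).symm
      constructor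
      · rw [Function.iterate_succ_apply', hfcn, hΦ1]
      · refine ⟨Dc * D + Dp, ?_, ?_⟩
        · have hfeq : (fun t : K => (fc p (Function.update c j t))^[n + 1] z)
              = fun t => fc p (Function.update c j t)
                  ((fun t : K => (fc p (Function.update c j t))^[n] z) t) := by
            funext t
            exact Function.iterate_succ_apply' _ _ _
          rw [hfeq]
          exact hder
        · right
          refine ⟨by omega, ?_⟩
          rcases hDn with ⟨hn0, hD0⟩ | ⟨hn1', hDval⟩
          · subst hn0
            rw [hD0, mul_zero, zero_add, hDp, hΦ1, hwn]
          · have hRjpos : 0 < R j := radii_pos hp2 hRad hj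
            have hr2 : 0 < R j ^ 2 := by positivity
            have ha0 : 0 < (phi p R)^[n + 1] ‖z‖ :=
              lt_trans hrho (phi_iter_gt_rho hp2 hRad hz (n + 1))
            have hb0 : 0 < (phi p R)^[n] ‖z‖ :=
              lt_trans hrho (phi_iter_gt_rho hp2 hRad hz n)
            have hd0 : 0 < (phi p R)^[n - 1] ‖z‖ :=
              lt_trans hrho (phi_iter_gt_rho hp2 hRad hz (n - 1))
            have hdb : (phi p R)^[n - 1] ‖z‖ < (phi p R)^[n] ‖z‖ := by
              have := phi_iter_mono hp2 hRad hz (n - 1)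
              rwa [(by omega : n - 1 + 1 = n)] at this
            have hDc' : ‖Dc‖ ≤ (phi p R)^[n + 1] ‖z‖ / (phi p R)^[n] ‖z‖ := by
              rw [← hΦ1, ← hwn]
              exact hDc
            have hlt : ‖Dc * D‖ < ‖Dp‖ := by
              rw [norm_mul, hDp, hΦ1, hwn]
              calc ‖Dc‖ * ‖D‖
                  ≤ ((phi p R)^[n + 1] ‖z‖ / (phi p R)^[n] ‖z‖)
                    * ((phi p R)^[n] ‖z‖ * (phi p R)^[n - 1] ‖z‖ / R j ^ 2) := by
                    refine mul_le_mul hDc' (le_of_eq hDval) (norm_nonneg _) ?_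
                    positivity
              _ = (phi p R)^[n + 1] ‖z‖ * (phi p R)^[n - 1] ‖z‖ / R j ^ 2 := by
                    field_simp
              _ < (phi p R)^[n + 1] ‖z‖ * (phi p R)^[n] ‖z‖ / R j ^ 2 := by gcongr
            rw [na_add_eq hna hlt, hDp, hΦ1, hwn]
            simp
  obtain ⟨_, D, hD, hcase⟩ := main N le_rfl
  rcases hcase with ⟨hN0, _⟩ | ⟨_, hDval⟩
  · omega
  · rw [hD.deriv, hDval]

end
end

section
/- Let r = (R_j)_{j≥1} be a generic sequence of radii, c ∈ C(r), and let ε = (ε_j)_{j≥2} be a sequence of positive reals with ε_j < R_j for all j and ε_j → 0 as j → ∞. Then for every R > 0 and every δ > 0 there exists K such that for all k ≥ K, all c' ∈ Δ_k(c,ε), and all z ∈ ℂ_p with |z| ≤ R, one has |f_c(z) − f_{c'}(z)| ≤ δ. In other words, sup{ sup_{|z|≤R} |f_c(z) − f_{c'}(z)| : c' ∈ Δ_k(c,ε) } → 0 as k → ∞. -/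
noncomputable section

open Filter Finset

section aux
variable {K : Type*} [NormedField K]

lemma aux_na_sub (hna : ∀ x y : K, ‖x + y‖ ≤ max ‖x‖ ‖y‖) (x y : K) :
    ‖x - y‖ ≤ max ‖x‖ ‖y‖ := by
  simpa [sub_eq_add_neg] using hna x (-y)

lemma aux_prod_diff (hna : ∀ x y : K, ‖x + y‖ ≤ max ‖x‖ ‖y‖)
    (a b : ℕ → K) (D : ℝ) (hD : 0 ≤ D) (s : Finset ℕ)
    (ha : ∀ j ∈ s, ‖a j‖ ≤ 1) (hb : ∀ j ∈ s, ‖b j‖ ≤ 1)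
    (hab : ∀ j ∈ s, ‖a j - b j‖ ≤ D) :
    ‖(∏ j ∈ s, a j) - ∏ j ∈ s, b j‖ ≤ D := by
  induction s using Finset.induction_on with
  | empty => simpa using hD
  | @insert i s hi ih =>
    rw [Finset.prod_insert hi, Finset.prod_insert hi]
    have key : a i * ∏ j ∈ s, a j - b i * ∏ j ∈ s, b j
        = a i * ((∏ j ∈ s, a j) - ∏ j ∈ s, b j) + (a i - b i) * ∏ j ∈ s, b j := by ring
    rw [key]
    have hbs : ‖∏ j ∈ s, b j‖ ≤ 1 := by
      rw [norm_prod]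
      exact Finset.prod_le_one (fun j _ => norm_nonneg _)
        (fun j hj => hb j (Finset.mem_insert_of_mem hj))
    refine (hna _ _).trans (max_le ?_ ?_)
    · rw [norm_mul]
      calc ‖a i‖ * ‖(∏ j ∈ s, a j) - ∏ j ∈ s, b j‖
          ≤ 1 * D := mul_le_mul (ha i (Finset.mem_insert_self i s))
            (ih (fun j hj => ha j (Finset.mem_insert_of_mem hj))
              (fun j hj => hb j (Finset.mem_insert_of_mem hj))
              (fun j hj => hab j (Finset.mem_insert_of_mem hj)))
            (norm_nonneg _) zero_le_one
        _ = D := one_mul D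
    · rw [norm_mul]
      calc ‖a i - b i‖ * ‖∏ j ∈ s, b j‖
          ≤ D * 1 := mul_le_mul (hab i (Finset.mem_insert_self i s)) hbs (norm_nonneg _) hD
        _ = D := mul_one D

lemma aux_prod_one_diff (hna : ∀ x y : K, ‖x + y‖ ≤ max ‖x‖ ‖y‖)
    (a : ℕ → K) (D : ℝ) (hD : 0 ≤ D) (s : Finset ℕ)
    (ha : ∀ j ∈ s, ‖a j‖ ≤ 1) (hab : ∀ j ∈ s, ‖a j - 1‖ ≤ D) :
    ‖(∏ j ∈ s, a j) - 1‖ ≤ D := by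
  have := aux_prod_diff hna a (fun _ => 1) D hD s ha (by simp) hab
  simpa using this

lemma aux_multipliable (hna : ∀ x y : K, ‖x + y‖ ≤ max ‖x‖ ‖y‖)
    (hcomp : CompleteSpace K) (f : ℕ → K) (J : ℕ)
    (h1 : ∀ j, J ≤ j → ‖f j‖ ≤ 1)
    (h2 : Tendsto (fun j => ‖f j - 1‖) atTop (nhds 0)) :
    Multipliable f := by
  haveI := hcomp
  set P : ℕ → K := fun N => ∏ j ∈ Finset.range N, f j with hP
  set C : ℝ := ‖P J‖ + 1 with hCdef
  have hC : 0 < C := by positivity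
  have hPle : ∀ N, J ≤ N → ‖P N‖ ≤ C - 1 := by
    intro N hN
    have hsplit := Finset.prod_range_mul_prod_Ico f hN
    have : ‖P N‖ ≤ ‖P J‖ * 1 := by
      rw [hP]
      simp only
      rw [← hsplit, norm_mul]
      refine mul_le_mul_of_nonneg_left ?_ (norm_nonneg _)
      rw [norm_prod]
      exact Finset.prod_le_one (fun j _ => norm_nonneg _)
        (fun j hj => h1 j (Finset.mem_Ico.mp hj).1)
    simpa [hCdef] using this
  -- tail smallness
  have htail : ∀ δ : ℝ, 0 < δ → ∃ N₁, ∀ j, N₁ ≤ j → ‖f j - 1‖ < δ := by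
    intro δ hδ
    have := (h2.eventually_lt_const hδ)
    exact eventually_atTop.mp this
  have hcs : CauchySeq P := by
    rw [Metric.cauchySeq_iff']
    intro ε hε
    obtain ⟨N₁, hN₁⟩ := htail (ε / (2 * C)) (by positivity)
    refine ⟨max J N₁, fun n hn => ?_⟩
    set N := max J N₁
    have hNn : N ≤ n := hn
    have hJN : J ≤ N := le_max_left _ _
    rw [dist_eq_norm]
    have hsplit := Finset.prod_range_mul_prod_Ico f hNn
    have heq : P n - P N = P N * ((∏ j ∈ Finset.Ico N n, f j) - 1) := by
      rw [hP]; simp only; rw [← hsplit]; ring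
    rw [heq, norm_mul]
    have hQ : ‖(∏ j ∈ Finset.Ico N n, f j) - 1‖ ≤ ε / (2 * C) := by
      refine aux_prod_one_diff hna f _ (by positivity) _ ?_ ?_
      · exact fun j hj => h1 j (hJN.trans (Finset.mem_Ico.mp hj).1)
      · exact fun j hj => le_of_lt (hN₁ j ((le_max_right J N₁).trans (Finset.mem_Ico.mp hj).1))
    calc ‖P N‖ * ‖(∏ j ∈ Finset.Ico N n, f j) - 1‖
        ≤ C * (ε / (2 * C)) := by
          refine mul_le_mul ((hPle N hJN).trans (by linarith)) hQ (norm_nonneg _) hC.le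
      _ = ε / 2 := by field_simp
      _ < ε := by linarith
  obtain ⟨L, hL⟩ := cauchySeq_tendsto_of_complete hcs
  refine ⟨L, ?_⟩
  rw [HasProd, SummationFilter.unconditional_filter, Metric.tendsto_atTop]
  intro ε hε
  obtain ⟨N₁, hN₁⟩ := htail (ε / (2 * C)) (by positivity)
  obtain ⟨N₃, hN₃⟩ := Metric.tendsto_atTop.mp hL (ε / 2) (by positivity)
  set N₂ := max (max J N₁) N₃ with hN₂def
  refine ⟨Finset.range N₂, fun s hs => ?_⟩
  have hJN₂ : J ≤ N₂ := (le_max_left J N₁).trans (le_max_left _ _)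
  have heq : (∏ j ∈ s, f j) - P N₂ = P N₂ * ((∏ j ∈ s \ Finset.range N₂, f j) - 1) := by
    rw [hP]; simp only
    rw [← Finset.prod_sdiff hs]; ring
  have hmem : ∀ j ∈ s \ Finset.range N₂, N₂ ≤ j := by
    intro j hj
    have := (Finset.mem_sdiff.mp hj).2
    simpa using this
  have h5 : ‖(∏ j ∈ s, f j) - P N₂‖ ≤ ε / 2 := by
    rw [heq, norm_mul]
    have hQ : ‖(∏ j ∈ s \ Finset.range N₂, f j) - 1‖ ≤ ε / (2 * C) := by
      refine aux_prod_one_diff hna f _ (by positivity) _ ?_ ?_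
      · exact fun j hj => h1 j (hJN₂.trans (hmem j hj))
      · intro j hj
        refine le_of_lt (hN₁ j ?_)
        exact ((le_max_right J N₁).trans (le_max_left _ _)).trans (hmem j hj)
    calc ‖P N₂‖ * ‖(∏ j ∈ s \ Finset.range N₂, f j) - 1‖
        ≤ C * (ε / (2 * C)) := mul_le_mul ((hPle N₂ hJN₂).trans (by linarith)) hQ
          (norm_nonneg _) hC.le
      _ = ε / 2 := by field_simp
  have h6 : dist (P N₂) L < ε / 2 := hN₃ N₂ (le_max_right _ _)
  calc dist (∏ j ∈ s, f j) L ≤ dist (∏ j ∈ s, f j) (P N₂) + dist (P N₂) L := dist_triangle _ _ _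
    _ < ε / 2 + ε / 2 := by
        rw [dist_eq_norm]
        exact add_lt_add_of_le_of_lt h5 h6
    _ = ε := by ring

end aux

/-- **Lemma 5.8** (uniform convergence on bounded sets). If `ε_j → 0`, then
`sup { sup_{|z| ≤ R₀} |f_c(z) - f_{c'}(z)| : c' ∈ Δ_k(c, ε) } → 0` as `k → ∞`. -/
theorem uniform_convergence
    (p : ℕ) [Fact p.Prime] (K : Type*) [NontriviallyNormedField K] [Algebra ℚ_[p] K]
    (hK : IsCp p K) (R : ℕ → ℝ) (hR : IsGenericRadii p R)
    (c : ℕ → K) (hc : InC p R c)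
    (ε : ℕ → ℝ) (hε : ∀ j, 2 ≤ j → 0 < ε j ∧ ε j < R j)
    (hε0 : Filter.Tendsto ε Filter.atTop (nhds 0)) :
    ∀ R₀ : ℝ, 0 < R₀ → ∀ δ : ℝ, 0 < δ → ∃ k₁ : ℕ, ∀ k, k₁ ≤ k →
      ∀ c' : ℕ → K, InDelta p R c ε k c' →
        ∀ z : K, ‖z‖ ≤ R₀ → ‖fc p c z - fc p c' z‖ ≤ δ := by
  classical
  haveI := hK.complete
  have hna := hK.isNonarch
  obtain ⟨⟨hmono, hR1, htop⟩, -⟩ := hR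
  intro R₀ hR₀ δ hδ
  have hp2 : (2:ℝ) ≤ (p:ℝ) := by exact_mod_cast (Fact.out : p.Prime).two_le
  have hR1pos : 0 < R 1 := by linarith
  have hRge : ∀ j, 1 ≤ j → R 1 ≤ R j := by
    intro j hj
    induction j with
    | zero => omega
    | succ n ih =>
      rcases Nat.lt_or_ge 1 (n+1) with h | h
      · have hn : 1 ≤ n := by omega
        exact (ih hn).trans (hmono n hn).le
      · have hn1 : n + 1 = 1 := by omega
        rw [hn1]
  have hRpos : ∀ j, 1 ≤ j → 0 < R j := fun j hj => hR1pos.trans_le (hRge j hj)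
  -- choose J₀ so that `R j ≥ R₀ + 1` for all `j ≥ J₀`
  obtain ⟨J₀', hJ₀'⟩ := Filter.eventually_atTop.mp (htop.eventually_ge_atTop (R₀ + 1))
  set J₀ := max J₀' 1 with hJ₀def
  have hJ₀1 : 1 ≤ J₀ := le_max_right _ _
  have hJ₀ : ∀ j, J₀ ≤ j → R₀ + 1 ≤ R j := fun j hj => hJ₀' j ((le_max_left _ _).trans hj)
  -- constants
  set M₀ : ℝ := max 1 (R₀ / R 1) with hM₀def
  have hM₀ : 1 ≤ M₀ := le_max_left _ _
  set CH : ℝ := M₀ ^ J₀ with hCHdef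
  have hCHpos : 0 < CH := by rw [hCHdef]; positivity
  have hnp : ‖(p:K)‖ = ((p:ℝ))⁻¹ := by
    have h := hK.norm_extends ((p : ℕ) : ℚ_[p])
    rw [map_natCast] at h
    rw [h, Padic.norm_p]
  have hnppos : 0 < ‖(p:K)‖ := by rw [hnp]; positivity
  have hA' : 0 < (R₀ ^ p / ‖(p:K)‖) * CH * (R₀ / (R 1)^2) :=
    mul_pos (mul_pos (div_pos (pow_pos hR₀ p) hnppos) hCHpos)
      (div_pos hR₀ (pow_pos hR1pos 2))
  set A' : ℝ := (R₀ ^ p / ‖(p:K)‖) * CH * (R₀ / (R 1)^2) with hA'def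
  set E : ℝ := δ / A' with hEdef
  have hE : 0 < E := div_pos hδ hA'
  obtain ⟨k₂, hk₂⟩ := Filter.eventually_atTop.mp (hε0.eventually_lt_const hE)
  refine ⟨max (J₀ + 1) k₂, fun k hk c' hc' z hz => ?_⟩
  have hkJ : J₀ + 1 ≤ k := le_trans (le_max_left _ _) hk
  have hkk₂ : k₂ ≤ k := le_trans (le_max_right _ _) hk
  obtain ⟨hc'C, hc'eq, hc'close⟩ := hc'
  -- nonvanishing
  have hc0 : ∀ j, 1 ≤ j → c j ≠ 0 := by
    intro j hj h
    have h2 := hc j hj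
    rw [h, norm_zero] at h2
    exact (hRpos j hj).ne h2
  have hc'0 : ∀ j, 1 ≤ j → c' j ≠ 0 := by
    intro j hj h
    have h2 := hc'C j hj
    rw [h, norm_zero] at h2
    exact (hRpos j hj).ne h2
  -- basic bounds on factors
  have hdivle : ∀ (d : ℕ → K), InC p R d → ∀ j : ℕ, ‖z / d (j+1)‖ ≤ R₀ / R (j+1) := by
    intro d hd j
    rw [norm_div, hd (j+1) (by omega)]
    have := hRpos (j+1) (by omega)
    gcongr
  have hfac_le : ∀ (d : ℕ → K), InC p R d → ∀ j : ℕ,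
      ‖1 - z / d (j+1)‖ ≤ max 1 (R₀ / R (j+1)) := by
    intro d hd j
    refine (aux_na_sub hna _ _).trans ?_
    rw [norm_one]
    exact max_le_max le_rfl (hdivle d hd j)
  have hfac_le_one : ∀ (d : ℕ → K), InC p R d → ∀ j : ℕ, J₀ ≤ j + 1 →
      ‖1 - z / d (j+1)‖ ≤ 1 := by
    intro d hd j hj
    have h1 := hJ₀ (j+1) hj
    have h2 : R₀ / R (j+1) ≤ 1 := (div_le_one (by linarith)).mpr (by linarith)
    exact (hfac_le d hd j).trans (max_le le_rfl h2)
  have hfac_le_M : ∀ (d : ℕ → K), InC p R d → ∀ j : ℕ, ‖1 - z / d (j+1)‖ ≤ M₀ := by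
    intro d hd j
    refine (hfac_le d hd j).trans ?_
    rw [hM₀def]
    refine max_le_max le_rfl ?_
    have h1 := hRge (j+1) (by omega)
    gcongr
  -- tendsto to one
  have h2t : ∀ (d : ℕ → K), InC p R d →
      Filter.Tendsto (fun j : ℕ => ‖(1 - z / d (j+1)) - 1‖) Filter.atTop (nhds 0) := by
    intro d hd
    have hb : ∀ j : ℕ, ‖(1 - z / d (j+1)) - 1‖ ≤ R₀ / R (j+1) := by
      intro j
      have heq : (1 - z / d (j+1)) - 1 = -(z / d (j+1)) := by ring
      rw [heq, norm_neg]
      exact hdivle d hd j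
    refine squeeze_zero (fun j => norm_nonneg _) hb ?_
    exact Filter.Tendsto.div_atTop tendsto_const_nhds (htop.comp (tendsto_add_atTop_nat 1))
  -- multipliability
  have hma : Multipliable (fun j : ℕ => 1 - z / c (j+1)) :=
    aux_multipliable hna hK.complete _ J₀ (fun j hj => hfac_le_one c hc j (by omega)) (h2t c hc)
  have hmb : Multipliable (fun j : ℕ => 1 - z / c' (j+1)) :=
    aux_multipliable hna hK.complete _ J₀ (fun j hj => hfac_le_one c' hc'C j (by omega))
      (h2t c' hc'C)
  have hta := hma.hasProd.tendsto_prod_nat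
  have htb := hmb.hasProd.tendsto_prod_nat
  -- per-factor difference bound beyond k
  have hdiffbd : ∀ j : ℕ, k - 1 ≤ j →
      ‖(1 - z / c (j+1)) - (1 - z / c' (j+1))‖ ≤ (R₀ / (R 1)^2) * E := by
    intro j hj
    have hc1 : c (j+1) ≠ 0 := hc0 _ (by omega)
    have hc'1 : c' (j+1) ≠ 0 := hc'0 _ (by omega)
    have heq : (1 - z / c (j+1)) - (1 - z / c' (j+1))
        = z * (c (j+1) - c' (j+1)) / (c (j+1) * c' (j+1)) := by
      field_simp
      ring
    rw [heq, norm_div, norm_mul, norm_mul, hc (j+1) (by omega), hc'C (j+1) (by omega)]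
    have hεlt : ‖c (j+1) - c' (j+1)‖ ≤ E := by
      rw [norm_sub_rev]
      have h1 := hc'close (j+1) (by omega)
      have h2 := hk₂ (j+1) (by omega)
      linarith
    have hR1le : R 1 ≤ R (j+1) := hRge (j+1) (by omega)
    have hnum : ‖z‖ * ‖c (j+1) - c' (j+1)‖ ≤ R₀ * E :=
      mul_le_mul hz hεlt (norm_nonneg _) hR₀.le
    calc ‖z‖ * ‖c (j+1) - c' (j+1)‖ / (R (j+1) * R (j+1))
        ≤ R₀ * E / (R 1 * R 1) := by
          apply div_le_div₀ (by positivity) hnum (by positivity)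
          exact mul_le_mul hR1le hR1le hR1pos.le (hRpos (j+1) (by omega)).le
      _ = (R₀ / (R 1)^2) * E := by ring
  -- finite-product bound
  have hfin : ∀ N, k - 1 ≤ N →
      ‖(∏ j ∈ Finset.range N, (1 - z / c (j+1)))
        - ∏ j ∈ Finset.range N, (1 - z / c' (j+1))‖ ≤ CH * ((R₀ / (R 1)^2) * E) := by
    intro N hN
    rw [← Finset.prod_range_mul_prod_Ico (fun j => 1 - z / c (j+1)) hN,
      ← Finset.prod_range_mul_prod_Ico (fun j => 1 - z / c' (j+1)) hN]
    have hhead : ∏ j ∈ Finset.range (k-1), (1 - z / c' (j+1))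
        = ∏ j ∈ Finset.range (k-1), (1 - z / c (j+1)) := by
      refine Finset.prod_congr rfl fun j hj => ?_
      have hjk := Finset.mem_range.mp hj
      rw [hc'eq (j+1) (by omega) (by omega)]
    rw [hhead, ← mul_sub, norm_mul]
    have hH : ‖∏ j ∈ Finset.range (k-1), (1 - z / c (j+1))‖ ≤ CH := by
      rw [norm_prod, ← Finset.prod_range_mul_prod_Ico (fun j => ‖1 - z / c (j+1)‖)
        (show J₀ ≤ k - 1 by omega)]
      have h1 : ∏ j ∈ Finset.range J₀, ‖1 - z / c (j+1)‖ ≤ M₀ ^ J₀ := by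
        calc ∏ j ∈ Finset.range J₀, ‖1 - z / c (j+1)‖
            ≤ ∏ _j ∈ Finset.range J₀, M₀ :=
              Finset.prod_le_prod (fun j _ => norm_nonneg _) (fun j _ => hfac_le_M c hc j)
          _ = M₀ ^ J₀ := by rw [Finset.prod_const, Finset.card_range]
      have h2 : ∏ j ∈ Finset.Ico J₀ (k-1), ‖1 - z / c (j+1)‖ ≤ 1 :=
        Finset.prod_le_one (fun j _ => norm_nonneg _)
          (fun j hj => hfac_le_one c hc j
            (by have := (Finset.mem_Ico.mp hj).1; omega))
      refine le_trans (mul_le_mul h1 h2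
        (Finset.prod_nonneg fun j _ => norm_nonneg _) (by positivity)) ?_
      rw [mul_one, hCHdef]
    have hT : ‖(∏ j ∈ Finset.Ico (k-1) N, (1 - z / c (j+1)))
        - ∏ j ∈ Finset.Ico (k-1) N, (1 - z / c' (j+1))‖ ≤ (R₀ / (R 1)^2) * E := by
      refine aux_prod_diff hna _ _ _ (by positivity) _ ?_ ?_ ?_
      · intro j hj
        exact hfac_le_one c hc j (by have := (Finset.mem_Ico.mp hj).1; omega)
      · intro j hj
        exact hfac_le_one c' hc'C j (by have := (Finset.mem_Ico.mp hj).1; omega)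
      · intro j hj
        exact hdiffbd j (Finset.mem_Ico.mp hj).1
    exact mul_le_mul hH hT (norm_nonneg _) hCHpos.le
  -- pass to the limit
  have hlim : Filter.Tendsto (fun N => ‖(∏ j ∈ Finset.range N, (1 - z / c (j+1)))
      - ∏ j ∈ Finset.range N, (1 - z / c' (j+1))‖) Filter.atTop
      (nhds ‖(∏' j : ℕ, (1 - z / c (j+1))) - ∏' j : ℕ, (1 - z / c' (j+1))‖) :=
    (hta.sub htb).norm
  have hbound : ‖(∏' j : ℕ, (1 - z / c (j+1))) - ∏' j : ℕ, (1 - z / c' (j+1))‖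
      ≤ CH * ((R₀ / (R 1)^2) * E) :=
    le_of_tendsto hlim (Filter.eventually_atTop.mpr ⟨k - 1, hfin⟩)
  -- conclude
  have hfceq : fc p c z - fc p c' z
      = z ^ p / (p:K) * ((∏' j : ℕ, (1 - z / c (j+1))) - ∏' j : ℕ, (1 - z / c' (j+1))) := by
    simp only [fc]
    ring
  rw [hfceq, norm_mul, norm_div, norm_pow]
  have hzp : ‖z‖ ^ p / ‖(p:K)‖ ≤ R₀ ^ p / ‖(p:K)‖ := by
    gcongr
  calc ‖z‖ ^ p / ‖(p:K)‖ * ‖(∏' j : ℕ, (1 - z / c (j+1))) - ∏' j : ℕ, (1 - z / c' (j+1))‖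
      ≤ (R₀ ^ p / ‖(p:K)‖) * (CH * ((R₀ / (R 1)^2) * E)) :=
        mul_le_mul hzp hbound (norm_nonneg _) (by positivity)
    _ = A' * E := by rw [hA'def]; ring
    _ = δ := by rw [hEdef]; field_simp
end
end
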